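/- arXiv:2410.11240 — 3 statements merged into one kernel-verified Lean document; each statement's English description precedes it below -/
import Mathlib

section
/- Let k ≥ 2 be an integer. There exists a constant C depending only on k such that the following holds: for every N ∈ ℕ, every β ∈ (0,1], and every family ζ₁, …, ζ_N of independent Bernoulli random variables with parameters q₁, …, q_N satisfying q_j ≤ β for all j, setting Γ_j = ζ_j − q_j one has E[(Σ_{j=1}^N Γ_j)^k] ≤ C Σ_{m=1}^{⌊k/2⌋} (Nβ)^m. In particular, if Nβ ≥ 1 then (Nβ)^{−k} E[(Σ_{j=1}^N Γ_j)^k] ≤ C (Nβ)^{−⌈k/2⌉}. -/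
open MeasureTheory ProbabilityTheory

open Finset


lemma bern_moment_aux {Ω : Type} [MeasurableSpace Ω] (P : Measure Ω) [IsProbabilityMeasure P]
    (ζ : Ω → ℝ) (q : ℝ) (hq0 : 0 ≤ q) (hq1 : q ≤ 1)
    (hζ : Measurable ζ)
    (hmap : Measure.map ζ P = ENNReal.ofReal q • Measure.dirac (1:ℝ)
      + ENNReal.ofReal (1-q) • Measure.dirac (0:ℝ)) (m : ℕ) :
    ∫ ω, (ζ ω - q) ^ m ∂P = q * (1-q)^m + (1-q) * (-q)^m := by
  have hg : Measurable fun x : ℝ => (x - q) ^ m := by measurability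
  have hx1 : ∀ᵐ x ∂(Measure.dirac (1:ℝ)), x = 1 := by
    rw [MeasureTheory.ae_dirac_eq]; exact Filter.eventually_pure.2 rfl
  have hx0 : ∀ᵐ x ∂(Measure.dirac (0:ℝ)), x = 0 := by
    rw [MeasureTheory.ae_dirac_eq]; exact Filter.eventually_pure.2 rfl
  have h1 : Integrable (fun x : ℝ => (x - q) ^ m) (Measure.dirac (1:ℝ)) := by
    refine (integrable_const ((1 - q)^m)).congr ?_
    filter_upwards [hx1] with x hx
    rw [hx]
  have h0 : Integrable (fun x : ℝ => (x - q) ^ m) (Measure.dirac (0:ℝ)) := by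
    refine (integrable_const ((0 - q)^m)).congr ?_
    filter_upwards [hx0] with x hx
    rw [hx]
  rw [← integral_map hζ.aemeasurable hg.aestronglyMeasurable, hmap,
    integral_add_measure (h1.smul_measure (by simp)) (h0.smul_measure (by simp)),
    integral_smul_measure, integral_smul_measure, integral_dirac, integral_dirac,
    ENNReal.toReal_ofReal hq0, ENNReal.toReal_ofReal (by linarith)]
  simp only [smul_eq_mul, zero_sub]

lemma bern_moment_bound (q : ℝ) (hq0 : 0 ≤ q) (hq1 : q ≤ 1) {m : ℕ} (hm : 2 ≤ m) :
    |q * (1-q)^m + (1-q) * (-q)^m| ≤ q := by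
  have h1 : (1-q)^m ≤ (1-q)^1 := pow_le_pow_of_le_one (by linarith) (by linarith) (by omega)
  have h2 : q^m ≤ q^2 := pow_le_pow_of_le_one hq0 hq1 hm
  have h3 : (0:ℝ) ≤ (1-q)^m := pow_nonneg (by linarith) m
  have h4 : (0:ℝ) ≤ q^m := pow_nonneg hq0 m
  have h5 : |(-q)^m| = q^m := by
    rw [abs_pow, abs_neg, abs_of_nonneg hq0]
  calc |q * (1-q)^m + (1-q) * (-q)^m| ≤ |q * (1-q)^m| + |(1-q) * (-q)^m| := abs_add_le _ _
    _ = q * (1-q)^m + (1-q) * q^m := by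
        rw [abs_mul, abs_mul, h5, abs_of_nonneg hq0, abs_of_nonneg h3,
          abs_of_nonneg (by linarith : (0:ℝ) ≤ 1 - q)]
    _ ≤ q := by nlinarith

lemma prod_integrable_aux {Ω : Type} [MeasurableSpace Ω] (P : Measure Ω) [IsProbabilityMeasure P]
    {N : ℕ} (g : Fin N → Ω → ℝ) (hmeas : ∀ j, Measurable (g j))
    (hbd : ∀ᵐ ω ∂P, ∀ j, |g j ω| ≤ 1) (s : Finset (Fin N)) :
    Integrable (fun ω => ∏ j ∈ s, g j ω) P := by
  refine Integrable.mono' (integrable_const 1)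
    (Finset.measurable_prod s fun j _ => hmeas j).aestronglyMeasurable ?_
  filter_upwards [hbd] with ω hω
  rw [Real.norm_eq_abs, Finset.abs_prod]
  exact Finset.prod_le_one (fun j _ => abs_nonneg _) (fun j _ => hω j)

lemma integral_prod_indep_aux {Ω : Type} [MeasurableSpace Ω] (P : Measure Ω)
    [IsProbabilityMeasure P]
    {N : ℕ} (g : Fin N → Ω → ℝ) (hmeas : ∀ j, Measurable (g j))
    (hbd : ∀ᵐ ω ∂P, ∀ j, |g j ω| ≤ 1)
    (hind : iIndepFun g P) (s : Finset (Fin N)) :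
    ∫ ω, ∏ j ∈ s, g j ω ∂P = ∏ j ∈ s, ∫ ω, g j ω ∂P := by
  induction s using Finset.induction with
  | empty => simp
  | @insert a s ha ih =>
    rw [Finset.prod_insert ha]
    have hint1 : Integrable (g a) P := by
      refine Integrable.mono' (integrable_const 1) (hmeas a).aestronglyMeasurable ?_
      filter_upwards [hbd] with ω hω using (Real.norm_eq_abs _) ▸ hω a
    have hint2 : Integrable (fun ω => ∏ j ∈ s, g j ω) P :=
      prod_integrable_aux P g hmeas hbd s
    have hdep : IndepFun (g a) (fun ω => ∏ j ∈ s, g j ω) P := by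
      have := (hind.indepFun_finsetProd_of_notMem hmeas ha).symm
      have he : (∏ j ∈ s, g j) = fun ω => ∏ j ∈ s, g j ω := by
        funext ω; simp [Finset.prod_apply]
      rwa [he] at this
    have := hdep.integral_mul_eq_mul_integral hint1.aestronglyMeasurable hint2.aestronglyMeasurable
    have he2 : (g a * fun ω => ∏ j ∈ s, g j ω) = fun ω => g a ω * ∏ j ∈ s, g j ω := rfl
    rw [he2] at this
    have he3 : ∀ ω, ∏ j ∈ insert a s, g j ω = g a ω * ∏ j ∈ s, g j ω := fun ω =>
      Finset.prod_insert ha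
    simp only [he3]
    rw [this, ih]

lemma comb_aux (k N : ℕ) (hk : 2 ≤ k) (β : ℝ) (hβ0 : 0 < β) :
    ∑ p ∈ (Finset.univ : Finset (Fin k → Fin N)).filter
        (fun p => ∀ j, #(Finset.univ.filter (fun i => p i = j)) ≠ 1),
      β ^ #(Finset.image p Finset.univ)
    ≤ (k:ℝ)^k * ∑ m ∈ Finset.Icc 1 (k/2), ((N:ℝ)*β)^m := by
  set S := (Finset.univ : Finset (Fin k → Fin N)).filter
      (fun p => ∀ j, #(Finset.univ.filter (fun i => p i = j)) ≠ 1) with hS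
  -- card of image is in Icc 1 (k/2) for p ∈ S
  have hcard : ∀ p ∈ S, 1 ≤ #(Finset.image p Finset.univ)
      ∧ #(Finset.image p Finset.univ) ≤ k / 2 := by
    intro p hp
    rw [hS, mem_filter] at hp
    have hp2 := hp.2
    constructor
    · have : (p ⟨0, by omega⟩) ∈ Finset.image p Finset.univ :=
        mem_image_of_mem p (mem_univ _)
      exact card_pos.2 ⟨_, this⟩
    · rw [Nat.le_div_iff_mul_le (by norm_num)]
      have hsum : ∑ j ∈ Finset.image p Finset.univ,
          #(Finset.univ.filter (fun i => p i = j)) = k := by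
        have := Finset.card_eq_sum_card_fiberwise
          (f := p) (s := (Finset.univ : Finset (Fin k)))
          (t := Finset.image p Finset.univ) (fun i _ => mem_image_of_mem p (mem_univ _))
        simpa using this.symm
      calc #(Finset.image p Finset.univ) * 2
          = ∑ _j ∈ Finset.image p Finset.univ, 2 := by rw [sum_const, smul_eq_mul]
        _ ≤ ∑ j ∈ Finset.image p Finset.univ,
              #(Finset.univ.filter (fun i => p i = j)) := by
            refine sum_le_sum fun j hj => ?_
            rcases mem_image.1 hj with ⟨i, _, hi⟩
            have hne : #(Finset.univ.filter (fun i' => p i' = j)) ≠ 1 := hp2 j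
            have hpos : 0 < #(Finset.univ.filter (fun i' => p i' = j)) :=
              card_pos.2 ⟨i, by simp [hi]⟩
            omega
        _ = k := hsum
  -- fiberwise over images
  have hfib := Finset.sum_fiberwise_of_maps_to
    (g := fun p : Fin k → Fin N => Finset.image p Finset.univ)
    (t := (Finset.univ : Finset (Fin N)).powerset)
    (s := S) (fun p _ => mem_powerset.2 (subset_univ _))
    (fun p => β ^ #(Finset.image p Finset.univ))
  rw [← hfib]
  -- bound each fiber
  have hinner : ∀ T ∈ (Finset.univ : Finset (Fin N)).powerset,
      ∑ p ∈ S.filter (fun p => Finset.image p Finset.univ = T),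
        β ^ #(Finset.image p Finset.univ)
      ≤ (k:ℝ)^k * (if #T ∈ Finset.Icc 1 (k/2) then β ^ #T else 0) := by
    intro T _
    rcases (S.filter (fun p => Finset.image p Finset.univ = T)).eq_empty_or_nonempty with h | h
    · rw [h, sum_empty]
      have : (0:ℝ) ≤ (k:ℝ)^k * (if #T ∈ Finset.Icc 1 (k/2) then β ^ #T else 0) := by
        positivity
      linarith
    · obtain ⟨p₀, hp₀⟩ := h
      rw [mem_filter] at hp₀
      have hT : #T ∈ Finset.Icc 1 (k/2) := by
        rw [Finset.mem_Icc, ← hp₀.2]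
        exact ⟨(hcard p₀ hp₀.1).1, (hcard p₀ hp₀.1).2⟩
      rw [if_pos hT]
      have heq : ∑ p ∈ S.filter (fun p => Finset.image p Finset.univ = T),
          β ^ #(Finset.image p Finset.univ)
          = #(S.filter (fun p => Finset.image p Finset.univ = T)) * β ^ #T := by
        rw [show ∑ p ∈ S.filter (fun p => Finset.image p Finset.univ = T),
            β ^ #(Finset.image p Finset.univ)
            = ∑ _p ∈ S.filter (fun p => Finset.image p Finset.univ = T), β ^ #T from
          sum_congr rfl fun p hp => by rw [(mem_filter.1 hp).2]]
        rw [sum_const, nsmul_eq_mul]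
      rw [heq]
      have hsub : S.filter (fun p => Finset.image p Finset.univ = T)
          ⊆ Fintype.piFinset (fun _ : Fin k => T) := by
        intro p hp
        rw [Fintype.mem_piFinset]
        intro i
        rw [← (mem_filter.1 hp).2]
        exact mem_image_of_mem p (mem_univ _)
      have hcardle : #(S.filter (fun p => Finset.image p Finset.univ = T)) ≤ #T ^ k := by
        have := Finset.card_le_card hsub
        rwa [Fintype.card_piFinset, Finset.prod_const, card_univ, Fintype.card_fin] at this
      have hTk : #T ^ k ≤ k ^ k := by
        have h1 : #T ≤ k := le_trans (mem_Icc.1 hT).2 (Nat.div_le_self k 2)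
        exact Nat.pow_le_pow_left h1 k
      have hβT : (0:ℝ) ≤ β ^ #T := le_of_lt (pow_pos hβ0 _)
      refine mul_le_mul_of_nonneg_right ?_ hβT
      exact_mod_cast le_trans hcardle hTk
  refine le_trans (sum_le_sum hinner) ?_
  rw [← mul_sum]
  refine mul_le_mul_of_nonneg_left ?_ (by positivity)
  rw [Finset.sum_powerset_apply_card (fun m => if m ∈ Finset.Icc 1 (k/2) then β ^ m else 0)]
  rw [card_univ, Fintype.card_fin]
  have hstep : ∑ m ∈ range (N + 1),
      N.choose m • (if m ∈ Finset.Icc 1 (k/2) then β ^ m else 0)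
      = ∑ m ∈ Finset.range (N+1) ∩ Finset.Icc 1 (k/2), (N.choose m : ℝ) * β ^ m := by
    rw [← Finset.sum_ite_mem]
    refine sum_congr rfl fun m _ => ?_
    split <;> simp
  rw [hstep]
  refine le_trans (sum_le_sum fun m hm => ?_)
    (Finset.sum_le_sum_of_subset_of_nonneg Finset.inter_subset_right ?_)
  · show (N.choose m : ℝ) * β ^ m ≤ ((N:ℝ)*β)^m
    rw [mul_pow]
    refine mul_le_mul_of_nonneg_right ?_ (le_of_lt (pow_pos hβ0 _))
    exact_mod_cast Nat.choose_le_pow N m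
  · intro m _ _
    positivity

lemma expand_pow_sum {k N : ℕ} (x : Fin N → ℝ) :
    (∑ j, x j)^k = ∑ p : Fin k → Fin N, ∏ j,
      x j ^ #(Finset.univ.filter fun i => p i = j) := by
  have h1 : (∑ j, x j)^k = ∏ _i : Fin k, ∑ j, x j := by
    rw [Finset.prod_const, Finset.card_univ, Fintype.card_fin]
  rw [h1, Finset.prod_univ_sum, Fintype.piFinset_univ]
  refine Finset.sum_congr rfl fun p _ => ?_
  rw [← Finset.prod_fiberwise Finset.univ p (fun i => x (p i))]
  refine Finset.prod_congr rfl fun j _ => ?_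
  rw [show ∏ i ∈ Finset.univ.filter (fun i => p i = j), x (p i)
      = ∏ _i ∈ Finset.univ.filter (fun i => p i = j), x j from
    Finset.prod_congr rfl fun i hi => by rw [(Finset.mem_filter.1 hi).2]]
  rw [Finset.prod_const]

/-- Centered moment bound for sums of independent Bernoulli random variables.
For every integer `k ≥ 2` there is a constant `C = C(k)` such that for all `N`, all
`β ∈ (0,1]` and all independent Bernoulli random variables `ζ₁, …, ζ_N` with parameters
`q_j ≤ β`, setting `Γ_j = ζ_j − q_j`, one has
`E[(Σ_j Γ_j)^k] ≤ C Σ_{m=1}^{⌊k/2⌋} (Nβ)^m`; in particular, if `Nβ ≥ 1` then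
`(Nβ)^{−k} E[(Σ_j Γ_j)^k] ≤ C (Nβ)^{−⌈k/2⌉}`. -/
theorem bernoulli_centered_sum_moment_bound (k : ℕ) (hk : 2 ≤ k) :
    ∃ C : ℝ, 0 < C ∧
      ∀ (N : ℕ) (β : ℝ), β ∈ Set.Ioc (0 : ℝ) 1 →
      ∀ (Ω : Type) [MeasurableSpace Ω] (P : Measure Ω) [IsProbabilityMeasure P]
        (ζ : Fin N → Ω → ℝ) (q : Fin N → ℝ),
        (∀ j, Measurable (ζ j)) →
        (∀ j, 0 ≤ q j) → (∀ j, q j ≤ β) →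
        (∀ j, Measure.map (ζ j) P =
          ENNReal.ofReal (q j) • Measure.dirac (1 : ℝ) +
            ENNReal.ofReal (1 - q j) • Measure.dirac (0 : ℝ)) →
        iIndepFun ζ P →
        (∫ ω, (∑ j, (ζ j ω - q j)) ^ k ∂P ≤
            C * ∑ m ∈ Finset.Icc 1 (k / 2), ((N : ℝ) * β) ^ m) ∧
        (1 ≤ (N : ℝ) * β →
          (((N : ℝ) * β) ^ k)⁻¹ * ∫ ω, (∑ j, (ζ j ω - q j)) ^ k ∂P ≤
            C * ((((N : ℝ) * β) ^ ((k + 1) / 2))⁻¹)) := by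
  have hkR : (0:ℝ) < (k:ℝ) := by exact_mod_cast (by omega : 0 < k)
  refine ⟨(k:ℝ)^k * k, by positivity, ?_⟩
  intro N β hβ Ω _ P _ ζ q hζ hq0 hqβ hmap hind
  obtain ⟨hβ0, hβ1⟩ := hβ
  have hq1 : ∀ j, q j ≤ 1 := fun j => (hqβ j).trans hβ1
  -- a.e. bound
  have hA : MeasurableSet ({0,1} : Set ℝ) := by measurability
  have hae1 : ∀ j, ∀ᵐ ω ∂P, ζ j ω ∈ ({0,1} : Set ℝ) := by
    intro j
    have h0 : P (ζ j ⁻¹' ({0,1}:Set ℝ)ᶜ) = 0 := by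
      rw [← Measure.map_apply (hζ j) hA.compl, hmap j]
      rw [Measure.coe_add, Pi.add_apply, Measure.smul_apply, Measure.smul_apply,
        Measure.dirac_apply' _ hA.compl, Measure.dirac_apply' _ hA.compl]
      simp
    rw [ae_iff]
    convert h0 using 2
    rfl
  have hae : ∀ᵐ ω ∂P, ∀ j, |ζ j ω - q j| ≤ 1 := by
    rw [ae_all_iff]
    intro j
    filter_upwards [hae1 j] with ω hω
    rcases hω with h | h
    · rw [show ζ j ω = 0 from h, abs_le]
      constructor <;> [linarith [hq1 j]; linarith [hq0 j]]
    · rw [show ζ j ω = 1 from h, abs_le]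
      constructor <;> [linarith [hq1 j]; linarith [hq0 j]]
  -- moments
  set M : Fin N → ℕ → ℝ := fun j c => q j * (1 - q j)^c + (1 - q j) * (-q j)^c with hMdef
  have hM : ∀ j c, ∫ ω, (ζ j ω - q j)^c ∂P = M j c :=
    fun j c => bern_moment_aux P (ζ j) (q j) (hq0 j) (hq1 j) (hζ j) (hmap j) c
  have hM1 : ∀ j, M j 1 = 0 := fun j => by simp only [hMdef, pow_one]; ring
  have hM0 : ∀ j, M j 0 = 1 := fun j => by simp only [hMdef, pow_zero]; ring
  have hMb : ∀ j c, 2 ≤ c → |M j c| ≤ β :=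
    fun j c hc => (bern_moment_bound (q j) (hq0 j) (hq1 j) hc).trans (hqβ j)
  -- multiplicities
  set c : (Fin k → Fin N) → Fin N → ℕ :=
    fun p j => #(Finset.univ.filter fun i => p i = j) with hcdef
  -- product integral for each p
  have hmeasp : ∀ (d : Fin N → ℕ) j, Measurable (fun ω => (ζ j ω - q j)^(d j)) :=
    fun d j => ((hζ j).sub_const _).pow_const _
  have hbdp : ∀ (d : Fin N → ℕ), ∀ᵐ ω ∂P, ∀ j, |(ζ j ω - q j)^(d j)| ≤ 1 := by
    intro d
    filter_upwards [hae] with ω hω j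
    rw [abs_pow]
    exact pow_le_one₀ (abs_nonneg _) (hω j)
  have hprod : ∀ (d : Fin N → ℕ),
      ∫ ω, ∏ j, (ζ j ω - q j)^(d j) ∂P = ∏ j, M j (d j) := by
    intro d
    have hcomp : iIndepFun
        (fun j (ω : Ω) => (ζ j ω - q j)^(d j)) P := by
      have := hind.comp (fun j (x:ℝ) => (x - q j)^(d j))
        (fun j => (measurable_id.sub_const _).pow_const _)
      exact this
    rw [integral_prod_indep_aux P _ (hmeasp d) (hbdp d) hcomp Finset.univ]
    exact Finset.prod_congr rfl fun j _ => hM j (d j)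
  -- expansion and swap
  have hswap : ∫ ω, (∑ j, (ζ j ω - q j)) ^ k ∂P = ∑ p : Fin k → Fin N, ∏ j, M j (c p j) := by
    have he : ∀ ω, (∑ j, (ζ j ω - q j)) ^ k
        = ∑ p : Fin k → Fin N, ∏ j, (ζ j ω - q j)^(c p j) :=
      fun ω => expand_pow_sum (fun j => ζ j ω - q j)
    simp only [he]
    rw [integral_finset_sum Finset.univ (fun p _ =>
      prod_integrable_aux P (fun j ω => (ζ j ω - q j)^(c p j)) (hmeasp (c p)) (hbdp (c p))
        Finset.univ)]
    exact Finset.sum_congr rfl fun p _ => hprod (c p)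
  -- set S
  set S := (Finset.univ : Finset (Fin k → Fin N)).filter
      (fun p => ∀ j, #(Finset.univ.filter fun i => p i = j) ≠ 1) with hSdef
  have hzero : ∀ p : Fin k → Fin N, p ∉ S → ∏ j, M j (c p j) = 0 := by
    intro p hp
    rw [hSdef, Finset.mem_filter, not_and] at hp
    have := hp (Finset.mem_univ p)
    push_neg at this
    obtain ⟨j, hj⟩ := this
    refine Finset.prod_eq_zero (Finset.mem_univ j) ?_
    rw [hcdef]
    simp only at hj ⊢
    rw [hj]
    exact hM1 j
  have habs : ∀ p ∈ S, |∏ j, M j (c p j)| ≤ β ^ #(Finset.image p Finset.univ) := by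
    intro p hp
    rw [hSdef, Finset.mem_filter] at hp
    have hp2 := hp.2
    have hres : ∏ j, M j (c p j) = ∏ j ∈ Finset.image p Finset.univ, M j (c p j) := by
      symm
      refine Finset.prod_subset (Finset.subset_univ _) ?_
      intro j _ hj
      have hc0 : c p j = 0 := by
        rw [hcdef]
        simp only [Finset.card_eq_zero, Finset.filter_eq_empty_iff]
        intro i _
        exact fun h => hj (h ▸ Finset.mem_image_of_mem p (Finset.mem_univ i))
      rw [hc0]
      exact hM0 j
    rw [hres, Finset.abs_prod]
    calc ∏ j ∈ Finset.image p Finset.univ, |M j (c p j)|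
        ≤ ∏ _j ∈ Finset.image p Finset.univ, β := by
          refine Finset.prod_le_prod (fun j _ => abs_nonneg _) ?_
          intro j hj
          refine hMb j (c p j) ?_
          obtain ⟨i, _, hi⟩ := Finset.mem_image.1 hj
          have hpos : 0 < #(Finset.univ.filter fun i' => p i' = j) :=
            Finset.card_pos.2 ⟨i, by simp [hi]⟩
          have hne := hp2 j
          show 2 ≤ #(Finset.univ.filter fun i' => p i' = j)
          omega
      _ = β ^ #(Finset.image p Finset.univ) := Finset.prod_const β
  -- main estimate
  have hmain : ∫ ω, (∑ j, (ζ j ω - q j)) ^ k ∂P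
      ≤ (k:ℝ)^k * ∑ m ∈ Finset.Icc 1 (k / 2), ((N : ℝ) * β) ^ m := by
    rw [hswap]
    have h1 : ∑ p : Fin k → Fin N, ∏ j, M j (c p j) = ∑ p ∈ S, ∏ j, M j (c p j) :=
      (Finset.sum_subset (Finset.subset_univ S) fun p _ hp => hzero p hp).symm
    rw [h1]
    calc ∑ p ∈ S, ∏ j, M j (c p j)
        ≤ ∑ p ∈ S, β ^ #(Finset.image p Finset.univ) :=
          Finset.sum_le_sum fun p hp => (le_abs_self _).trans (habs p hp)
      _ ≤ (k:ℝ)^k * ∑ m ∈ Finset.Icc 1 (k / 2), ((N : ℝ) * β) ^ m :=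
          comb_aux k N hk β hβ0
  have hsumnn : (0:ℝ) ≤ ∑ m ∈ Finset.Icc 1 (k / 2), ((N : ℝ) * β) ^ m := by
    refine Finset.sum_nonneg fun m _ => ?_
    positivity
  constructor
  · refine hmain.trans ?_
    refine mul_le_mul_of_nonneg_right ?_ hsumnn
    have hk1 : (1:ℝ) ≤ (k:ℝ) := by exact_mod_cast (by omega : 1 ≤ k)
    nlinarith [pow_pos hkR k, hk1]
  · intro hx
    set x := (N:ℝ) * β with hxdef
    have hx0 : 0 < x := lt_of_lt_of_le one_pos hx
    have hsumle : ∑ m ∈ Finset.Icc 1 (k / 2), x ^ m ≤ (k:ℝ) * x ^ (k/2) := by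
      calc ∑ m ∈ Finset.Icc 1 (k / 2), x ^ m
          ≤ ∑ _m ∈ Finset.Icc 1 (k / 2), x ^ (k/2) :=
            Finset.sum_le_sum fun m hm =>
              pow_le_pow_right₀ hx (Finset.mem_Icc.1 hm).2
        _ = (#(Finset.Icc 1 (k/2)) : ℝ) * x ^ (k/2) := by
            rw [Finset.sum_const, nsmul_eq_mul]
        _ ≤ (k:ℝ) * x ^ (k/2) := by
            refine mul_le_mul_of_nonneg_right ?_ (le_of_lt (pow_pos hx0 _))
            rw [Nat.card_Icc]
            exact_mod_cast (by omega : k/2 + 1 - 1 ≤ k)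
    have hkey : (x^k)⁻¹ * x^(k/2) = (x^((k+1)/2))⁻¹ := by
      have hsplit : x^k = x^(k/2) * x^((k+1)/2) := by
        rw [← pow_add]
        congr 1
        omega
      rw [hsplit]
      field_simp
    have hE := hmain
    have step1 : (x^k)⁻¹ * ∫ ω, (∑ j, (ζ j ω - q j)) ^ k ∂P
        ≤ (x^k)⁻¹ * ((k:ℝ)^k * ((k:ℝ) * x ^ (k/2))) := by
      refine mul_le_mul_of_nonneg_left ?_ (by positivity)
      refine hE.trans ?_
      exact mul_le_mul_of_nonneg_left hsumle (by positivity)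
    refine step1.trans ?_
    have : (x^k)⁻¹ * ((k:ℝ)^k * ((k:ℝ) * x ^ (k/2)))
        = (k:ℝ)^k * (k:ℝ) * ((x^k)⁻¹ * x^(k/2)) := by ring
    rw [this, hkey]
end

section
/- Let g, h : [0,1]² → [0,∞) be Borel-measurable and let (μ^y)_{y∈[0,1]} and (μ′^y)_{y∈[0,1]} be measurable families of Borel probability measures on ℝⁿ. Then the function y ↦ d_BL(μ^y, μ′^y) is measurable, and for every x ∈ [0,1] with ∫₀¹ g(x,y) dy < ∞ and ∫₀¹ h(x,y) dy < ∞ the graphon mixtures satisfy d_BL(ν^{g,μ,x}, ν^{h,μ′,x}) ≤ ∫₀¹ |g(x,y) − h(x,y)| dy + ∫₀¹ h(x,y) d_BL(μ^y, μ′^y) dy. -/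
open MeasureTheory
open scoped NNReal ENNReal
open Metric Set Filter Topology

set_option linter.unusedSectionVars false

/-- The set of continuous functions `ℝⁿ → ℝ` that are `1`-Lipschitz and bounded by `1`. -/
def oneLipb (n : ℕ) : Set (EuclideanSpace ℝ (Fin n) → ℝ) :=
  {f | Continuous f ∧ (∀ x y, |f x - f y| ≤ ‖x - y‖) ∧ ∀ x, |f x| ≤ 1}

/-- The bounded-Lipschitz distance `d_BL(μ,ν) = sup_{f ∈ 1-Lip_b} (∫ f dμ − ∫ f dν)` between
finite nonnegative Borel measures on `ℝⁿ`. -/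
noncomputable def dBL {n : ℕ} (μ ν : Measure (EuclideanSpace ℝ (Fin n))) : ℝ :=
  ⨆ f : oneLipb n, (∫ x, f.1 x ∂μ - ∫ x, f.1 x ∂ν)

namespace DBLAux


variable {n : ℕ}

lemma zero_mem_oneLipb (n : ℕ) : (fun _ : EuclideanSpace ℝ (Fin n) => (0:ℝ)) ∈ oneLipb n :=
  ⟨continuous_const, fun x y => by simp, fun x => by simp⟩

instance (n : ℕ) : Nonempty (oneLipb n) := ⟨⟨_, zero_mem_oneLipb n⟩⟩

noncomputable def toBCF {f : EuclideanSpace ℝ (Fin n) → ℝ} (hf : f ∈ oneLipb n) :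
    BoundedContinuousFunction (EuclideanSpace ℝ (Fin n)) ℝ :=
  BoundedContinuousFunction.mkOfBound ⟨f, hf.1⟩ 2 (fun x y => by
    rw [Real.dist_eq]
    calc |f x - f y| ≤ |f x| + |f y| := abs_sub _ _
      _ ≤ 1 + 1 := add_le_add (hf.2.2 x) (hf.2.2 y)
      _ = 2 := by norm_num)

@[simp] lemma toBCF_apply {f : EuclideanSpace ℝ (Fin n) → ℝ} (hf : f ∈ oneLipb n) (z) :
    toBCF hf z = f z := rfl

lemma integrable_oneLipb {f : EuclideanSpace ℝ (Fin n) → ℝ} (hf : f ∈ oneLipb n)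
    (P : Measure (EuclideanSpace ℝ (Fin n))) [IsFiniteMeasure P] : Integrable f P :=
  (toBCF hf).integrable P

lemma abs_integral_le_mass {f : EuclideanSpace ℝ (Fin n) → ℝ} (hf : f ∈ oneLipb n)
    (P : Measure (EuclideanSpace ℝ (Fin n))) [IsFiniteMeasure P] :
    |∫ z, f z ∂P| ≤ (P Set.univ).toReal := by
  calc |∫ z, f z ∂P| ≤ ∫ z, |f z| ∂P := by
        simpa [Real.norm_eq_abs] using norm_integral_le_integral_norm (μ := P) f
    _ ≤ ∫ _z, (1:ℝ) ∂P :=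
        integral_mono (integrable_oneLipb hf P).abs (integrable_const 1) (fun z => hf.2.2 z)
    _ = (P Set.univ).toReal := by simp; rfl

lemma bddAbove_dBL_range (P Q : Measure (EuclideanSpace ℝ (Fin n)))
    [IsFiniteMeasure P] [IsFiniteMeasure Q] :
    BddAbove (Set.range fun f : oneLipb n => (∫ x, f.1 x ∂P - ∫ x, f.1 x ∂Q)) := by
  refine ⟨(P Set.univ).toReal + (Q Set.univ).toReal, ?_⟩
  rintro r ⟨f, rfl⟩
  have h1 := abs_le.mp (abs_integral_le_mass f.2 P)
  have h2 := abs_le.mp (abs_integral_le_mass f.2 Q)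
  have := h1.2; have := h2.1
  dsimp only
  linarith

lemma sub_integral_le_dBL {f : EuclideanSpace ℝ (Fin n) → ℝ} (hf : f ∈ oneLipb n)
    (P Q : Measure (EuclideanSpace ℝ (Fin n))) [IsFiniteMeasure P] [IsFiniteMeasure Q] :
    ∫ z, f z ∂P - ∫ z, f z ∂Q ≤ dBL P Q :=
  le_ciSup (bddAbove_dBL_range P Q) (⟨f, hf⟩ : oneLipb n)

lemma dBL_nonneg (P Q : Measure (EuclideanSpace ℝ (Fin n)))
    [IsFiniteMeasure P] [IsFiniteMeasure Q] : 0 ≤ dBL P Q := by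
  have := sub_integral_le_dBL (zero_mem_oneLipb n) P Q
  simpa using this

lemma dBL_le_two (P Q : Measure (EuclideanSpace ℝ (Fin n)))
    [IsProbabilityMeasure P] [IsProbabilityMeasure Q] : dBL P Q ≤ 2 := by
  apply ciSup_le
  intro f
  have h1 := abs_le.mp (abs_integral_le_mass f.2 P)
  have h2 := abs_le.mp (abs_integral_le_mass f.2 Q)
  have h3 : (P Set.univ).toReal = 1 := by simp
  have h4 : (Q Set.univ).toReal = 1 := by simp
  rw [h3] at h1; rw [h4] at h2
  have := h1.2; have := h2.1
  linarith


section PM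

variable {Ω : Type*} [MetricSpace Ω] [MeasurableSpace Ω] [BorelSpace Ω]
  [SecondCountableTopology Ω]


noncomputable local instance : MeasurableSpace (ProbabilityMeasure Ω) := borel _
local instance : BorelSpace (ProbabilityMeasure Ω) := ⟨rfl⟩

lemma continuous_lintegral_nn (f : BoundedContinuousFunction Ω ℝ≥0) :
    Continuous fun P : ProbabilityMeasure Ω => ∫⁻ z, (f z : ℝ≥0∞) ∂(P : Measure Ω) := by
  rw [continuous_iff_continuousAt]
  intro P
  exact continuousAt_of_tendsto_nhds
    (ProbabilityMeasure.tendsto_iff_forall_lintegral_tendsto.mp tendsto_id f)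

lemma measurable_eval {A : Set Ω} (hA : MeasurableSet A) :
    Measurable (fun P : ProbabilityMeasure Ω => (P : Measure Ω) A) := by
  have hgen : (inferInstance : MeasurableSpace Ω) = .generateFrom {s : Set Ω | IsClosed s} := by
    rw [BorelSpace.measurable_eq (α := Ω), borel_eq_generateFrom_isClosed]
  have hpi : IsPiSystem {s : Set Ω | IsClosed s} := fun s hs t ht _ => hs.inter ht
  refine MeasurableSpace.induction_on_inter
    (C := fun A _ => Measurable (fun P : ProbabilityMeasure Ω => (P : Measure Ω) A))
    hgen hpi ?_ ?_ ?_ ?_ _ hA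
  · simpa using (measurable_const : Measurable fun _ : ProbabilityMeasure Ω => (0 : ℝ≥0∞))
  · -- closed sets
    intro F hF
    have hFc : IsClosed F := hF
    -- the approximating lintegrals
    set L : ℕ → ProbabilityMeasure Ω → ℝ≥0∞ := fun k P =>
      ∫⁻ z, thickenedIndicatorAux (1/(k+1)) F z ∂(P : Measure Ω) with hL
    have hδpos : ∀ k : ℕ, (0:ℝ) < 1/(k+1) := fun k => by positivity
    have key : ∀ P : ProbabilityMeasure Ω, (P : Measure Ω) F = ⨅ k, L k P := by
      intro P
      have hanti : Antitone fun k => L k P := by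
        intro k l hkl
        apply lintegral_mono
        apply thickenedIndicatorAux_mono
        apply one_div_le_one_div_of_le (by positivity)
        have : (k:ℝ) ≤ l := Nat.cast_le.mpr hkl
        linarith
      have htd : Tendsto (fun k => L k P) atTop (𝓝 ((P : Measure Ω) F)) := by
        have hlow : ∀ k, (P : Measure Ω) F ≤ L k P := by
          intro k
          rw [← lintegral_indicator_one hFc.measurableSet]
          exact lintegral_mono (indicator_le_thickenedIndicatorAux _ _)
        have hup : ∀ k, L k P ≤ (P : Measure Ω) (thickening (1/(k+1)) F) := by
          intro k
          rw [← lintegral_indicator_one isOpen_thickening.measurableSet]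
          apply lintegral_mono
          intro z
          by_cases hz : z ∈ thickening (1/(k+1):ℝ) F
          · rw [Set.indicator_of_mem hz]
            simpa using thickenedIndicatorAux_le_one (1/(k+1)) F z
          · rw [Set.indicator_of_notMem hz, thickenedIndicatorAux_zero (hδpos k) F hz]
        have hthick : Tendsto (fun k : ℕ => (P : Measure Ω) (thickening (1/(k+1)) F)) atTop
            (𝓝 ((P : Measure Ω) F)) := by
          have h1 : Tendsto (fun k : ℕ => 1/((k:ℝ)+1)) atTop (𝓝[>] 0) := by
            apply tendsto_nhdsWithin_of_tendsto_nhds_of_eventually_within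
            · exact tendsto_one_div_add_atTop_nhds_zero_nat
            · exact Eventually.of_forall fun k => hδpos k
          exact (tendsto_measure_thickening_of_isClosed
            ⟨1, one_pos, measure_ne_top _ _⟩ hFc).comp h1
        exact tendsto_of_tendsto_of_tendsto_of_le_of_le tendsto_const_nhds hthick hlow hup
      exact tendsto_nhds_unique htd (tendsto_atTop_iInf hanti)
    have : (fun P : ProbabilityMeasure Ω => (P : Measure Ω) F) = fun P => ⨅ k, L k P :=
      funext key
    rw [this]
    refine Measurable.iInf fun k => ?_
    have hcoe : ∀ (P : ProbabilityMeasure Ω), L k P =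
        ∫⁻ z, ((thickenedIndicator (hδpos k) F) z : ℝ≥0∞) ∂(P : Measure Ω) := by
      intro P
      apply lintegral_congr
      intro z
      rw [thickenedIndicator.coeFn_eq_comp]
      simp only [Function.comp_apply]
      rw [ENNReal.coe_toNNReal thickenedIndicatorAux_lt_top.ne]
    have h2 : L k = fun P : ProbabilityMeasure Ω =>
        ∫⁻ z, ((thickenedIndicator (hδpos k) F) z : ℝ≥0∞) ∂(P : Measure Ω) := funext hcoe
    rw [h2]
    exact (continuous_lintegral_nn (thickenedIndicator (hδpos k) F)).measurable
  · intro t ht hC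
    have : (fun P : ProbabilityMeasure Ω => (P : Measure Ω) tᶜ)
        = fun P : ProbabilityMeasure Ω => 1 - (P : Measure Ω) t := by
      funext P
      rw [measure_compl ht (measure_ne_top _ _)]
      simp
    rw [this]
    exact measurable_const.sub hC
  · intro s hdisj hmeas hC
    have : (fun P : ProbabilityMeasure Ω => (P : Measure Ω) (⋃ i, s i))
        = fun P : ProbabilityMeasure Ω => ∑' i, (P : Measure Ω) (s i) := by
      funext P; exact measure_iUnion hdisj hmeas
    rw [this]
    exact Measurable.ennreal_tsum hC

lemma measurable_toMeasure :
    Measurable (fun P : ProbabilityMeasure Ω => (P : Measure Ω)) :=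
  Measure.measurable_of_measurable_coe _ fun _A hA => measurable_eval hA

lemma measurable_integral_BCF (fb : BoundedContinuousFunction Ω ℝ)
    {μ : ℝ → ProbabilityMeasure Ω} (hμ : Measurable μ) :
    Measurable fun y => ∫ z, fb z ∂(μ y : Measure Ω) :=
  (ProbabilityMeasure.continuous_integral_boundedContinuousFunction fb).measurable.comp hμ


end PM


variable {n : ℕ}

lemma abs_inf'_sub_inf'_le {ι : Type*} (s : Finset ι) (hs : s.Nonempty) (f g : ι → ℝ) {c : ℝ}
    (hc : ∀ i ∈ s, |f i - g i| ≤ c) : |s.inf' hs f - s.inf' hs g| ≤ c := by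
  have key : ∀ (u v : ι → ℝ), (∀ i ∈ s, |u i - v i| ≤ c) → s.inf' hs u - c ≤ s.inf' hs v := by
    intro u v huv
    apply Finset.le_inf'
    intro i hi
    have h1 := Finset.inf'_le u hi
    have h2 := (abs_le.mp (huv i hi)).2
    linarith
  have h1 := key f g hc
  have h2 := key g f (fun i hi => by rw [abs_sub_comm]; exact hc i hi)
  rw [abs_le]; constructor <;> linarith

/-- The countable index type for the approximating family. -/
abbrev DIdx : Type := Σ k : ℕ, Fin (k+1) → ℚ

noncomputable def dfun (n : ℕ) (σ : DIdx) : EuclideanSpace ℝ (Fin n) → ℝ :=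
  fun z => max (-1) (min 1 ((Finset.univ : Finset (Fin (σ.1+1))).inf' Finset.univ_nonempty
    (fun i => (σ.2 i : ℝ) + dist z (TopologicalSpace.denseSeq (EuclideanSpace ℝ (Fin n)) i))))

lemma dfun_lip (σ : DIdx) (x y : EuclideanSpace ℝ (Fin n)) :
    |dfun n σ x - dfun n σ y| ≤ ‖x - y‖ := by
  set Q := TopologicalSpace.denseSeq (EuclideanSpace ℝ (Fin n))
  set tx := (Finset.univ : Finset (Fin (σ.1+1))).inf' Finset.univ_nonempty
    (fun i => (σ.2 i : ℝ) + dist x (Q i))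
  set ty := (Finset.univ : Finset (Fin (σ.1+1))).inf' Finset.univ_nonempty
    (fun i => (σ.2 i : ℝ) + dist y (Q i))
  have h0 : |tx - ty| ≤ ‖x - y‖ := by
    apply abs_inf'_sub_inf'_le
    intro i _
    have : (σ.2 i : ℝ) + dist x (Q i) - ((σ.2 i : ℝ) + dist y (Q i))
        = dist x (Q i) - dist y (Q i) := by ring
    rw [this, ← dist_eq_norm]
    exact abs_dist_sub_le _ _ _
  have h1 : |min 1 tx - min 1 ty| ≤ |tx - ty| := by
    have := abs_min_sub_min_le_max (1:ℝ) tx 1 ty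
    simpa using this
  have h2 : |max (-1) (min 1 tx) - max (-1) (min 1 ty)| ≤ |min 1 tx - min 1 ty| := by
    have := abs_max_sub_max_le_abs (min 1 tx) (min 1 ty) (-1:ℝ)
    simpa [max_comm] using this
  calc |dfun n σ x - dfun n σ y| ≤ |min 1 tx - min 1 ty| := h2
    _ ≤ |tx - ty| := h1
    _ ≤ ‖x - y‖ := h0

lemma dfun_mem (σ : DIdx) : dfun n σ ∈ oneLipb n := by
  refine ⟨?_, dfun_lip σ, ?_⟩
  · have : LipschitzWith 1 (dfun n σ) := by
      apply LipschitzWith.of_dist_le_mul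
      intro x y
      rw [Real.dist_eq, NNReal.coe_one, one_mul, dist_eq_norm]
      exact dfun_lip σ x y
    exact this.continuous
  · intro z
    rw [abs_le]
    constructor
    · exact le_max_left _ _
    · exact max_le (by norm_num) (min_le_left _ _)


lemma bddAbove_dIdx_range (P Q : Measure (EuclideanSpace ℝ (Fin n)))
    [IsFiniteMeasure P] [IsFiniteMeasure Q] :
    BddAbove (Set.range fun σ : DIdx =>
      (∫ z, dfun n σ z ∂P - ∫ z, dfun n σ z ∂Q)) := by
  refine ⟨(P Set.univ).toReal + (Q Set.univ).toReal, ?_⟩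
  rintro r ⟨σ, rfl⟩
  have h1 := abs_le.mp (abs_integral_le_mass (dfun_mem σ) P)
  have h2 := abs_le.mp (abs_integral_le_mass (dfun_mem σ) Q)
  have := h1.2; have := h2.1
  dsimp only
  linarith

lemma dfun_tendsto {f : EuclideanSpace ℝ (Fin n) → ℝ} (hf : f ∈ oneLipb n)
    {q : ℕ → ℕ → ℚ} (hq : ∀ j i, |f (TopologicalSpace.denseSeq (EuclideanSpace ℝ (Fin n)) i)
      - (q j i : ℝ)| < 1/(j+1)) (z : EuclideanSpace ℝ (Fin n)) :
    Tendsto (fun j : ℕ => dfun n (⟨j, fun i => q j (i : ℕ)⟩ : DIdx) z) atTop (𝓝 (f z)) := by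
  set Q := TopologicalSpace.denseSeq (EuclideanSpace ℝ (Fin n)) with hQ
  rw [Metric.tendsto_atTop]
  intro ε hε
  obtain ⟨i₀, hi₀⟩ : ∃ i₀, dist z (Q i₀) < ε/4 :=
    (TopologicalSpace.denseRange_denseSeq (EuclideanSpace ℝ (Fin n))).exists_dist_lt z
      (by positivity)
  obtain ⟨N, hN⟩ : ∃ N : ℕ, 1/((N:ℝ)+1) < ε/4 := exists_nat_one_div_lt (by positivity)
  refine ⟨max i₀ N, fun j hj => ?_⟩
  have hji : i₀ ≤ j := le_trans (le_max_left _ _) hj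
  have hjN : N ≤ j := le_trans (le_max_right _ _) hj
  have hδj : (0:ℝ) < 1/(j+1) := by positivity
  have hδ : 1/((j:ℝ)+1) < ε/4 := by
    refine lt_of_le_of_lt ?_ hN
    apply one_div_le_one_div_of_le (by positivity)
    have : (N:ℝ) ≤ j := Nat.cast_le.mpr hjN
    linarith
  have hfz := abs_le.mp (hf.2.2 z)
  set t := (Finset.univ : Finset (Fin (j+1))).inf' Finset.univ_nonempty
    (fun i => (q j (i:ℕ) : ℝ) + dist z (Q (i:ℕ))) with ht
  have hdfun : dfun n (⟨j, fun i => q j (i : ℕ)⟩ : DIdx) z = max (-1) (min 1 t) := rfl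
  -- lower bound
  have hlow : f z - 1/(j+1) ≤ dfun n (⟨j, fun i => q j (i : ℕ)⟩ : DIdx) z := by
    rw [hdfun]
    have h1 : ∀ i : Fin (j+1), f z - 1/(j+1) ≤ (q j (i:ℕ) : ℝ) + dist z (Q (i:ℕ)) := by
      intro i
      have hlip := (abs_le.mp (hf.2.1 z (Q (i:ℕ)))).2
      have habs := (abs_le.mp (hq j (i:ℕ)).le).2
      have hd : ‖z - Q (i:ℕ)‖ = dist z (Q (i:ℕ)) := (dist_eq_norm _ _).symm
      rw [hd] at hlip
      linarith
    have h2 : f z - 1/(j+1) ≤ t := Finset.le_inf' _ _ (fun i _ => h1 i)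
    have h3 : f z - 1/(j+1) ≤ min 1 t := le_min (by linarith [hfz.2]) h2
    exact le_trans h3 (le_max_right _ _)
  -- upper bound
  have hup : dfun n (⟨j, fun i => q j (i : ℕ)⟩ : DIdx) z
      ≤ f z + 2*dist z (Q i₀) + 1/(j+1) := by
    rw [hdfun]
    have hmem : (⟨i₀, by omega⟩ : Fin (j+1)) ∈ (Finset.univ : Finset (Fin (j+1))) :=
      Finset.mem_univ _
    have h1 : t ≤ (q j i₀ : ℝ) + dist z (Q i₀) := Finset.inf'_le _ hmem
    have h2 : (q j i₀:ℝ) ≤ f (Q i₀) + 1/(j+1) := by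
      have := (abs_le.mp (hq j i₀).le).1; linarith
    have h3 : f (Q i₀) ≤ f z + dist z (Q i₀) := by
      have hlip := (abs_le.mp (hf.2.1 (Q i₀) z)).2
      have hd : ‖Q i₀ - z‖ = dist z (Q i₀) := by rw [← dist_eq_norm, dist_comm]
      rw [hd] at hlip
      linarith
    have h4 : t ≤ f z + 2*dist z (Q i₀) + 1/(j+1) := by
      have := dist_nonneg (x := z) (y := Q i₀); linarith
    refine max_le (by linarith [hfz.1, dist_nonneg (x := z) (y := Q i₀)]) ?_
    exact le_trans (min_le_right _ _) h4
  rw [Real.dist_eq]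
  have habs : |dfun n (⟨j, fun i => q j (i : ℕ)⟩ : DIdx) z - f z|
      ≤ 2*dist z (Q i₀) + 1/(j+1) := by
    rw [abs_le]
    constructor
    · have := dist_nonneg (x := z) (y := Q i₀); linarith
    · linarith
  calc |dfun n (⟨j, fun i => q j (i : ℕ)⟩ : DIdx) z - f z| ≤ 2*dist z (Q i₀) + 1/(j+1) := habs
    _ < 2*(ε/4) + ε/4 := by linarith
    _ < ε := by linarith

lemma dBL_eq_iSup (P Q : ProbabilityMeasure (EuclideanSpace ℝ (Fin n))) :
    dBL (P : Measure (EuclideanSpace ℝ (Fin n))) (Q : Measure (EuclideanSpace ℝ (Fin n)))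
      = ⨆ σ : DIdx, (∫ z, dfun n σ z ∂(P : Measure (EuclideanSpace ℝ (Fin n)))
        - ∫ z, dfun n σ z ∂(Q : Measure (EuclideanSpace ℝ (Fin n)))) := by
  apply le_antisymm
  · apply ciSup_le
    rintro ⟨f, hf⟩
    have hq : ∀ j i : ℕ, ∃ qq : ℚ,
        |f (TopologicalSpace.denseSeq (EuclideanSpace ℝ (Fin n)) i) - (qq:ℝ)| < 1/(j+1) :=
      fun j i => exists_rat_near _ (by positivity)
    choose q hq using hq
    have hpt : ∀ z, Tendsto (fun j : ℕ => dfun n (⟨j, fun i => q j (i : ℕ)⟩ : DIdx) z)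
        atTop (𝓝 (f z)) := dfun_tendsto hf hq
    have hPt : Tendsto (fun j : ℕ => ∫ z, dfun n (⟨j, fun i => q j (i : ℕ)⟩ : DIdx) z
        ∂(P : Measure (EuclideanSpace ℝ (Fin n)))) atTop
        (𝓝 (∫ z, f z ∂(P : Measure (EuclideanSpace ℝ (Fin n))))) := by
      apply tendsto_integral_of_dominated_convergence (fun _ => (1:ℝ))
      · exact fun j => ((dfun_mem _).1).aestronglyMeasurable
      · exact integrable_const 1
      · exact fun j => Eventually.of_forall fun z => by
          simpa [Real.norm_eq_abs] using (dfun_mem (⟨j, fun i => q j (i : ℕ)⟩ : DIdx)).2.2 z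
      · exact Eventually.of_forall hpt
    have hQt : Tendsto (fun j : ℕ => ∫ z, dfun n (⟨j, fun i => q j (i : ℕ)⟩ : DIdx) z
        ∂(Q : Measure (EuclideanSpace ℝ (Fin n)))) atTop
        (𝓝 (∫ z, f z ∂(Q : Measure (EuclideanSpace ℝ (Fin n))))) := by
      apply tendsto_integral_of_dominated_convergence (fun _ => (1:ℝ))
      · exact fun j => ((dfun_mem _).1).aestronglyMeasurable
      · exact integrable_const 1
      · exact fun j => Eventually.of_forall fun z => by
          simpa [Real.norm_eq_abs] using (dfun_mem (⟨j, fun i => q j (i : ℕ)⟩ : DIdx)).2.2 z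
      · exact Eventually.of_forall hpt
    refine le_of_tendsto (hPt.sub hQt) (Eventually.of_forall fun j => ?_)
    exact le_ciSup (bddAbove_dIdx_range _ _) (⟨j, fun i => q j (i : ℕ)⟩ : DIdx)
  · apply ciSup_le
    intro σ
    exact sub_integral_le_dBL (dfun_mem σ) _ _

lemma mixture_integral
    (μ : ℝ → ProbabilityMeasure (EuclideanSpace ℝ (Fin n)))
    (hμM : Measurable fun y => (μ y : Measure (EuclideanSpace ℝ (Fin n))))
    (G : ℝ → ℝ) (hG : Measurable G) (hGnn : ∀ y, 0 ≤ G y)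
    (hGint : IntegrableOn G (Set.Icc 0 1))
    (ν : Measure (EuclideanSpace ℝ (Fin n))) [IsFiniteMeasure ν]
    (hν : ∀ A : Set (EuclideanSpace ℝ (Fin n)), MeasurableSet A → ν A
      = ∫⁻ y in Set.Icc (0:ℝ) 1, ENNReal.ofReal (G y)
          * (μ y : Measure (EuclideanSpace ℝ (Fin n))) A)
    (fb : BoundedContinuousFunction (EuclideanSpace ℝ (Fin n)) ℝ) :
    ∫ z, fb z ∂ν = ∫ y in Set.Icc (0:ℝ) 1,
      G y * ∫ z, fb z ∂(μ y : Measure (EuclideanSpace ℝ (Fin n))) := by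
  set vol : Measure ℝ := volume.restrict (Set.Icc (0:ℝ) 1) with hvol
  have hdens : Measurable fun y => ENNReal.ofReal (G y) := hG.ennreal_ofReal
  set m : Measure ℝ := vol.withDensity (fun y => ENNReal.ofReal (G y)) with hm
  have hm_univ : m Set.univ = ∫⁻ y, ENNReal.ofReal (G y) ∂vol := by
    rw [hm, withDensity_apply _ MeasurableSet.univ, Measure.restrict_univ]
  haveI hfin : IsFiniteMeasure m := by
    constructor
    rw [hm_univ]
    exact lt_top_iff_ne_top.mpr
      ((lintegral_ofReal_ne_top_iff_integrable hGint.aestronglyMeasurable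
        (Eventually.of_forall hGnn)).mpr hGint)
  have hbind : ν = m.bind (fun y => (μ y : Measure (EuclideanSpace ℝ (Fin n)))) := by
    refine Measure.ext fun A hA => ?_
    have hgm : Measurable fun y => (μ y : Measure (EuclideanSpace ℝ (Fin n))) A :=
      (Measure.measurable_coe hA).comp hμM
    rw [hν A hA, Measure.bind_apply hA hμM.aemeasurable, hm,
      lintegral_withDensity_eq_lintegral_mul vol hdens hgm]
    rfl
  set c : ℝ := ‖fb‖ with hc
  have hcnn : 0 ≤ c := norm_nonneg _
  set F : EuclideanSpace ℝ (Fin n) → ℝ := fun z => fb z + c with hF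
  have hFnn : ∀ z, 0 ≤ F z := fun z => by
    have := (abs_le.mp (by simpa [Real.norm_eq_abs] using fb.norm_coe_le_norm z)).1
    simp only [hF]; linarith
  have hFm : Measurable F := fb.continuous.measurable.add measurable_const
  have hFb : ∀ z, F z ≤ 2*c := fun z => by
    have := (abs_le.mp (by simpa [Real.norm_eq_abs] using fb.norm_coe_le_norm z)).2
    simp only [hF]; linarith
  have A0 : ∀ (Pm : Measure (EuclideanSpace ℝ (Fin n))) [IsFiniteMeasure Pm],
      ∫ z, fb z ∂Pm = (∫⁻ z, ENNReal.ofReal (F z) ∂Pm).toReal - c * (Pm Set.univ).toReal := by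
    intro Pm _
    have h1 : ∫ z, F z ∂Pm = (∫⁻ z, ENNReal.ofReal (F z) ∂Pm).toReal :=
      integral_eq_lintegral_of_nonneg_ae (Eventually.of_forall hFnn) hFm.aestronglyMeasurable
    have h2 : ∫ z, F z ∂Pm = ∫ z, fb z ∂Pm + c * (Pm Set.univ).toReal := by
      rw [hF]
      rw [integral_add (fb.integrable Pm) (integrable_const c), integral_const, smul_eq_mul,
        mul_comm]
      rfl
    linarith
  set L : ℝ → ℝ≥0∞ := fun y =>
    ∫⁻ z, ENNReal.ofReal (F z) ∂(μ y : Measure (EuclideanSpace ℝ (Fin n))) with hLdef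
  have hLmeas : Measurable L := (Measure.measurable_lintegral hFm.ennreal_ofReal).comp hμM
  have hLle : ∀ y, L y ≤ ENNReal.ofReal (2*c) := by
    intro y
    calc L y ≤ ∫⁻ _z, ENNReal.ofReal (2*c)
          ∂(μ y : Measure (EuclideanSpace ℝ (Fin n))) :=
        lintegral_mono fun z => ENNReal.ofReal_le_ofReal (hFb z)
      _ = ENNReal.ofReal (2*c) := by simp
  have hLlt : ∀ y, L y < ∞ := fun y => lt_of_le_of_lt (hLle y) ENNReal.ofReal_lt_top
  have hνuniv : ν Set.univ = m Set.univ := by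
    rw [hbind, Measure.bind_apply MeasurableSet.univ hμM.aemeasurable]
    simp
  have key1 : ∫ z, fb z ∂ν = (∫⁻ y, L y ∂m).toReal - c * (m Set.univ).toReal := by
    rw [A0 ν, hνuniv]
    congr 2
    rw [hbind, Measure.lintegral_bind hμM.aemeasurable hFm.ennreal_ofReal.aemeasurable]
  have hint : Integrable (fun y => (L y).toReal) m := by
    apply Integrable.mono' (integrable_const (2*c)) hLmeas.ennreal_toReal.aestronglyMeasurable
    apply Eventually.of_forall
    intro y
    rw [Real.norm_eq_abs, abs_of_nonneg ENNReal.toReal_nonneg]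
    exact ENNReal.toReal_le_of_le_ofReal (by linarith) (hLle y)
  have key2 : ∫ y, (∫ z, fb z ∂(μ y : Measure (EuclideanSpace ℝ (Fin n)))) ∂m
      = (∫⁻ y, L y ∂m).toReal - c * (m Set.univ).toReal := by
    have hptw : ∀ y, ∫ z, fb z ∂(μ y : Measure (EuclideanSpace ℝ (Fin n)))
        = (L y).toReal - c := by
      intro y
      rw [A0 (μ y : Measure (EuclideanSpace ℝ (Fin n)))]
      simp
      rfl
    calc ∫ y, (∫ z, fb z ∂(μ y : Measure (EuclideanSpace ℝ (Fin n)))) ∂m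
        = ∫ y, ((L y).toReal - c) ∂m := by
          exact integral_congr_ae (Eventually.of_forall hptw)
      _ = (∫ y, (L y).toReal ∂m) - c * (m Set.univ).toReal := by
          rw [integral_sub hint (integrable_const c), integral_const, smul_eq_mul, mul_comm]
          rfl
      _ = (∫⁻ y, L y ∂m).toReal - c * (m Set.univ).toReal := by
          rw [integral_toReal hLmeas.aemeasurable (Eventually.of_forall hLlt)]
  have key3 : ∫ y, (∫ z, fb z ∂(μ y : Measure (EuclideanSpace ℝ (Fin n)))) ∂m
      = ∫ y in Set.Icc (0:ℝ) 1,
        G y * ∫ z, fb z ∂(μ y : Measure (EuclideanSpace ℝ (Fin n))) := by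
    have hmeq : m = vol.withDensity (fun y => ((G y).toNNReal : ℝ≥0∞)) := rfl
    rw [hmeq, integral_withDensity_eq_integral_smul hG.real_toNNReal]
    refine integral_congr_ae (Eventually.of_forall fun y => ?_)
    simp only [NNReal.smul_def, Real.coe_toNNReal', max_eq_left (hGnn y), smul_eq_mul]
  rw [key1, ← key2, key3]

instance : Countable DIdx := by infer_instance

lemma measurable_dBL
    (μ μ' : ℝ → ProbabilityMeasure (EuclideanSpace ℝ (Fin n)))
    (hμ : @Measurable ℝ (ProbabilityMeasure (EuclideanSpace ℝ (Fin n))) _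
      (borel (ProbabilityMeasure (EuclideanSpace ℝ (Fin n)))) μ)
    (hμ' : @Measurable ℝ (ProbabilityMeasure (EuclideanSpace ℝ (Fin n))) _
      (borel (ProbabilityMeasure (EuclideanSpace ℝ (Fin n)))) μ') :
    Measurable (fun y => dBL (μ y : Measure (EuclideanSpace ℝ (Fin n)))
      (μ' y : Measure (EuclideanSpace ℝ (Fin n)))) := by
  have heq : (fun y => dBL (μ y : Measure (EuclideanSpace ℝ (Fin n)))
      (μ' y : Measure (EuclideanSpace ℝ (Fin n))))
      = fun y => ⨆ σ : DIdx, (∫ z, dfun n σ z ∂(μ y : Measure (EuclideanSpace ℝ (Fin n)))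
        - ∫ z, dfun n σ z ∂(μ' y : Measure (EuclideanSpace ℝ (Fin n)))) :=
    funext fun y => dBL_eq_iSup (μ y) (μ' y)
  rw [heq]
  refine Measurable.iSup fun σ => Measurable.sub ?_ ?_
  · exact measurable_integral_BCF (toBCF (dfun_mem σ)) hμ
  · exact measurable_integral_BCF (toBCF (dfun_mem σ)) hμ'

end DBLAux

open DBLAux

/-- Let `g, h : [0,1]² → [0,∞)` be Borel and let `(μ y)`, `(μ' y)` be
measurable families of Borel probability measures on `ℝⁿ`. Then `y ↦ d_BL(μ^y, μ'^y)` is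
measurable and, for every `x ∈ [0,1]` with `∫₀¹ g x y dy < ∞` and `∫₀¹ h x y dy < ∞`, the
graphon mixtures satisfy
`d_BL(ν^{g,μ,x}, ν^{h,μ',x}) ≤ ∫₀¹ |g x y − h x y| dy + ∫₀¹ h x y · d_BL(μ^y, μ'^y) dy`. -/

theorem dBL_graphon_mixture_stability (n : ℕ)
    (g h : ℝ → ℝ → ℝ)
    (hg_meas : Measurable (Function.uncurry g))
    (hh_meas : Measurable (Function.uncurry h))
    (hg_nonneg : ∀ x y, 0 ≤ g x y)
    (hh_nonneg : ∀ x y, 0 ≤ h x y)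
    (μ μ' : ℝ → ProbabilityMeasure (EuclideanSpace ℝ (Fin n)))
    (hμ : @Measurable ℝ (ProbabilityMeasure (EuclideanSpace ℝ (Fin n))) _
      (borel (ProbabilityMeasure (EuclideanSpace ℝ (Fin n)))) μ)
    (hμ' : @Measurable ℝ (ProbabilityMeasure (EuclideanSpace ℝ (Fin n))) _
      (borel (ProbabilityMeasure (EuclideanSpace ℝ (Fin n)))) μ') :
    Measurable (fun y => dBL (μ y : Measure (EuclideanSpace ℝ (Fin n)))
      (μ' y : Measure (EuclideanSpace ℝ (Fin n)))) ∧
    ∀ x ∈ Set.Icc (0 : ℝ) 1,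
      IntegrableOn (fun y => g x y) (Set.Icc 0 1) →
      IntegrableOn (fun y => h x y) (Set.Icc 0 1) →
      ∀ (νg νh : Measure (EuclideanSpace ℝ (Fin n))),
        IsFiniteMeasure νg → IsFiniteMeasure νh →
        (∀ A : Set (EuclideanSpace ℝ (Fin n)), MeasurableSet A →
          νg A = ∫⁻ y in Set.Icc (0 : ℝ) 1, ENNReal.ofReal (g x y) *
            (μ y : Measure (EuclideanSpace ℝ (Fin n))) A) →
        (∀ A : Set (EuclideanSpace ℝ (Fin n)), MeasurableSet A →
          νh A = ∫⁻ y in Set.Icc (0 : ℝ) 1, ENNReal.ofReal (h x y) *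
            (μ' y : Measure (EuclideanSpace ℝ (Fin n))) A) →
        dBL νg νh ≤
          (∫ y in Set.Icc (0 : ℝ) 1, |g x y - h x y|) +
            ∫ y in Set.Icc (0 : ℝ) 1, h x y *
              dBL (μ y : Measure (EuclideanSpace ℝ (Fin n)))
                (μ' y : Measure (EuclideanSpace ℝ (Fin n))) := by
  constructor
  · exact measurable_dBL μ μ' hμ hμ'
  intro x _hx hgInt hhInt νg νh hfing hfinh hνg hνh
  haveI := hfing; haveI := hfinh
  have hμM : Measurable fun y => (μ y : Measure (EuclideanSpace ℝ (Fin n))) :=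
    measurable_toMeasure.comp hμ
  have hμ'M : Measurable fun y => (μ' y : Measure (EuclideanSpace ℝ (Fin n))) :=
    measurable_toMeasure.comp hμ'
  have hgx : Measurable fun y => g x y :=
    hg_meas.comp (measurable_const.prodMk measurable_id)
  have hhx : Measurable fun y => h x y :=
    hh_meas.comp (measurable_const.prodMk measurable_id)
  -- dBL properties
  have hdBLmeas := measurable_dBL μ μ' hμ hμ'
  have hdBLbd : ∀ y, |dBL (μ y : Measure (EuclideanSpace ℝ (Fin n)))
      (μ' y : Measure (EuclideanSpace ℝ (Fin n)))| ≤ 2 := by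
    intro y
    have h0 := dBL_nonneg (μ y : Measure (EuclideanSpace ℝ (Fin n)))
      (μ' y : Measure (EuclideanSpace ℝ (Fin n)))
    have h2 := dBL_le_two (μ y : Measure (EuclideanSpace ℝ (Fin n)))
      (μ' y : Measure (EuclideanSpace ℝ (Fin n)))
    rw [abs_le]
    exact ⟨by linarith, h2⟩
  refine ciSup_le ?_
  rintro ⟨f, hf⟩
  dsimp only
  set I : ℝ → ℝ := fun y => ∫ z, f z ∂(μ y : Measure (EuclideanSpace ℝ (Fin n))) with hI
  set I' : ℝ → ℝ := fun y => ∫ z, f z ∂(μ' y : Measure (EuclideanSpace ℝ (Fin n))) with hI'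
  have hImeas : Measurable I := measurable_integral_BCF (toBCF hf) hμ
  have hI'meas : Measurable I' := measurable_integral_BCF (toBCF hf) hμ'
  have hIbd : ∀ y, |I y| ≤ 1 := fun y => by
    simpa using abs_integral_le_mass hf (μ y : Measure (EuclideanSpace ℝ (Fin n)))
  have hI'bd : ∀ y, |I' y| ≤ 1 := fun y => by
    simpa using abs_integral_le_mass hf (μ' y : Measure (EuclideanSpace ℝ (Fin n)))
  have hiq : ∫ z, f z ∂νg = ∫ y in Set.Icc (0:ℝ) 1, g x y * I y :=
    mixture_integral μ hμM (fun y => g x y) hgx (fun y => hg_nonneg x y) hgInt νg hνg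
      (toBCF hf)
  have hiq' : ∫ z, f z ∂νh = ∫ y in Set.Icc (0:ℝ) 1, h x y * I' y :=
    mixture_integral μ' hμ'M (fun y => h x y) hhx (fun y => hh_nonneg x y) hhInt νh hνh
      (toBCF hf)
  -- integrabilities
  have intg : IntegrableOn (fun y => g x y * I y) (Set.Icc (0:ℝ) 1) := by
    have h1 : IntegrableOn (fun y => I y * g x y) (Set.Icc (0:ℝ) 1) :=
      hgInt.bdd_mul hImeas.aestronglyMeasurable
        (Eventually.of_forall fun y => (by simpa [Real.norm_eq_abs] using hIbd y : ‖I y‖ ≤ 1))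
    simpa [mul_comm] using h1
  have inth : IntegrableOn (fun y => h x y * I' y) (Set.Icc (0:ℝ) 1) := by
    have h1 : IntegrableOn (fun y => I' y * h x y) (Set.Icc (0:ℝ) 1) :=
      hhInt.bdd_mul hI'meas.aestronglyMeasurable
        (Eventually.of_forall fun y => (by simpa [Real.norm_eq_abs] using hI'bd y : ‖I' y‖ ≤ 1))
    simpa [mul_comm] using h1
  have intabs : IntegrableOn (fun y => |g x y - h x y|) (Set.Icc (0:ℝ) 1) :=
    (hgInt.sub hhInt).abs
  have inthd : IntegrableOn (fun y => h x y * dBL (μ y : Measure (EuclideanSpace ℝ (Fin n)))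
      (μ' y : Measure (EuclideanSpace ℝ (Fin n)))) (Set.Icc (0:ℝ) 1) := by
    have h1 : IntegrableOn (fun y => dBL (μ y : Measure (EuclideanSpace ℝ (Fin n)))
        (μ' y : Measure (EuclideanSpace ℝ (Fin n))) * h x y) (Set.Icc (0:ℝ) 1) :=
      hhInt.bdd_mul hdBLmeas.aestronglyMeasurable
        (Eventually.of_forall fun y => (by simpa [Real.norm_eq_abs] using hdBLbd y :
          ‖dBL (μ y : Measure (EuclideanSpace ℝ (Fin n)))
            (μ' y : Measure (EuclideanSpace ℝ (Fin n)))‖ ≤ 2))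
    simpa [mul_comm] using h1
  calc ∫ z, f z ∂νg - ∫ z, f z ∂νh
      = (∫ y in Set.Icc (0:ℝ) 1, g x y * I y) - ∫ y in Set.Icc (0:ℝ) 1, h x y * I' y := by
        rw [hiq, hiq']
    _ = ∫ y in Set.Icc (0:ℝ) 1, (g x y * I y - h x y * I' y) := (integral_sub intg inth).symm
    _ ≤ ∫ y in Set.Icc (0:ℝ) 1, (|g x y - h x y|
          + h x y * dBL (μ y : Measure (EuclideanSpace ℝ (Fin n)))
            (μ' y : Measure (EuclideanSpace ℝ (Fin n)))) := by
        apply integral_mono (intg.sub inth) (intabs.add inthd)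
        intro y
        have hIy := abs_le.mp (hIbd y)
        have hI'y := abs_le.mp (hI'bd y)
        have hsub : I y - I' y ≤ dBL (μ y : Measure (EuclideanSpace ℝ (Fin n)))
            (μ' y : Measure (EuclideanSpace ℝ (Fin n))) := sub_integral_le_dBL hf _ _
        have hhy : 0 ≤ h x y := hh_nonneg x y
        have h2 : (g x y - h x y) * I y ≤ |g x y - h x y| := by
          calc (g x y - h x y) * I y ≤ |(g x y - h x y) * I y| := le_abs_self _
            _ = |g x y - h x y| * |I y| := abs_mul _ _
            _ ≤ |g x y - h x y| * 1 := mul_le_mul_of_nonneg_left (hIbd y) (abs_nonneg _)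
            _ = |g x y - h x y| := mul_one _
        have h3 : h x y * (I y - I' y) ≤ h x y * dBL (μ y : Measure (EuclideanSpace ℝ (Fin n)))
            (μ' y : Measure (EuclideanSpace ℝ (Fin n))) :=
          mul_le_mul_of_nonneg_left hsub hhy
        have h1 : g x y * I y - h x y * I' y
            = (g x y - h x y) * I y + h x y * (I y - I' y) := by ring
        simp only [Pi.sub_apply, Pi.add_apply]
        linarith
    _ = (∫ y in Set.Icc (0:ℝ) 1, |g x y - h x y|)
          + ∫ y in Set.Icc (0:ℝ) 1, h x y * dBL (μ y : Measure (EuclideanSpace ℝ (Fin n)))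
            (μ' y : Measure (EuclideanSpace ℝ (Fin n))) := integral_add intabs inthd
end

section
/- Let c > 0, M > 0, β ∈ (0,1] and N ∈ ℕ. Let (ζ_{ij})_{1≤i,j≤N} be mutually independent random variables with ζ_{ij} ~ Bernoulli(q_{ij}) and q_{ij} ≤ cβ for all i, j, and let b₁, …, b_N be nonnegative random variables on the same probability space with E[b_j⁴] ≤ M for all j. Set Γ_{ij} = ζ_{ij} − q_{ij}. Then there exists a constant C depending only on c and M such that (1/N) Σ_{i=1}^N E[ ( (1/(Nβ)) Σ_{j=1}^N Γ_{ij} b_j )² ] ≤ C ( (Nβ)^{−3/2} + (Nβ)^{−1} + (N β²)^{−1/2} ). -/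
open MeasureTheory ProbabilityTheory

variable {Ω : Type*} [MeasurableSpace Ω] {P : Measure Ω}

lemma aux_integrable_dirac {g : ℝ → ℝ} (hg : Measurable g) (x : ℝ) :
    Integrable g (Measure.dirac x) := by
  refine ⟨hg.aestronglyMeasurable, ?_⟩
  simp [HasFiniteIntegral, MeasureTheory.lintegral_dirac]

lemma aux_bern_integral [IsProbabilityMeasure P] {ζ : Ω → ℝ} (hζ : Measurable ζ)
    {q : ℝ} (hq0 : 0 ≤ q) (hq1 : q ≤ 1)
    (hlaw : Measure.map ζ P =
      ENNReal.ofReal q • Measure.dirac (1:ℝ) + ENNReal.ofReal (1-q) • Measure.dirac (0:ℝ))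
    (g : ℝ → ℝ) (hg : Measurable g) :
    ∫ ω, g (ζ ω) ∂P = q * g 1 + (1-q) * g 0 := by
  rw [← integral_map hζ.aemeasurable hg.aestronglyMeasurable, hlaw,
    integral_add_measure ((aux_integrable_dirac hg 1).smul_measure ENNReal.ofReal_ne_top)
      ((aux_integrable_dirac hg 0).smul_measure ENNReal.ofReal_ne_top),
    integral_smul_measure, integral_smul_measure, integral_dirac, integral_dirac,
    ENNReal.toReal_ofReal hq0, ENNReal.toReal_ofReal (by linarith)]
  simp [smul_eq_mul]

lemma aux_bern_ae [IsProbabilityMeasure P] {ζ : Ω → ℝ} (hζ : Measurable ζ)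
    {q : ℝ}
    (hlaw : Measure.map ζ P =
      ENNReal.ofReal q • Measure.dirac (1:ℝ) + ENNReal.ofReal (1-q) • Measure.dirac (0:ℝ)) :
    ∀ᵐ ω ∂P, ζ ω = 0 ∨ ζ ω = 1 := by
  have hs : MeasurableSet ({0,1}ᶜ : Set ℝ) :=
    (MeasurableSet.insert (measurableSet_singleton 1) 0).compl
  have h0 : P (ζ ⁻¹' ({0,1}ᶜ)) = 0 := by
    rw [← Measure.map_apply hζ hs, hlaw]
    simp [Measure.dirac_apply]
  rw [ae_iff]
  have hset : {ω | ¬(ζ ω = 0 ∨ ζ ω = 1)} = ζ ⁻¹' ({0,1}ᶜ : Set ℝ) := by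
    ext ω; simp
  rw [hset]; exact h0

lemma aux_cauchy_schwarz [IsProbabilityMeasure P] {f g : Ω → ℝ}
    (hf : AEStronglyMeasurable f P) (hg : AEStronglyMeasurable g P)
    (hf2 : Integrable (fun ω => f ω ^ 2) P) (hg2 : Integrable (fun ω => g ω ^ 2) P) :
    ∫ ω, f ω * g ω ∂P ≤ Real.sqrt (∫ ω, f ω ^ 2 ∂P) * Real.sqrt (∫ ω, g ω ^ 2 ∂P) := by
  have hpq : Real.HolderConjugate 2 2 := Real.holderConjugate_iff.mpr ⟨one_lt_two, by norm_num⟩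
  have hfm : MemLp f 2 P := (memLp_two_iff_integrable_sq hf).2 hf2
  have hgm : MemLp g 2 P := (memLp_two_iff_integrable_sq hg).2 hg2
  have h2 : (2 : ENNReal) = ENNReal.ofReal (2:ℝ) := by norm_num
  have key := integral_mul_norm_le_Lp_mul_Lq (μ := P) hpq (h2 ▸ hfm) (h2 ▸ hgm)
  have h1 : ∫ ω, f ω * g ω ∂P ≤ ∫ ω, ‖f ω‖ * ‖g ω‖ ∂P := by
    have hint : Integrable (fun ω => ‖f ω‖ * ‖g ω‖) P := by
      refine Integrable.mono' ((hf2.add hg2).div_const 2) (hf.norm.mul hg.norm) ?_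
      filter_upwards with ω
      simp only [Pi.add_apply, Real.norm_eq_abs, norm_mul, abs_abs]
      nlinarith [sq_abs (f ω), sq_abs (g ω), abs_nonneg (f ω * g ω), abs_mul (f ω) (g ω), sq_nonneg (|f ω| - |g ω|)]
    calc ∫ ω, f ω * g ω ∂P ≤ ‖∫ ω, f ω * g ω ∂P‖ := le_abs_self _
      _ ≤ ∫ ω, ‖f ω * g ω‖ ∂P := norm_integral_le_integral_norm _
      _ = ∫ ω, ‖f ω‖ * ‖g ω‖ ∂P := by congr 1; ext ω; simp [abs_mul]
  refine h1.trans (key.trans_eq ?_)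
  rw [← Real.sqrt_eq_rpow, ← Real.sqrt_eq_rpow]
  congr 2
  · refine integral_congr_ae ?_
    filter_upwards with ω
    rw [show ((2:ℝ)) = ((2:ℕ):ℝ) by norm_num, Real.rpow_natCast]
    simp [sq_abs]
  · refine integral_congr_ae ?_
    filter_upwards with ω
    rw [show ((2:ℝ)) = ((2:ℕ):ℝ) by norm_num, Real.rpow_natCast]
    simp [sq_abs]

lemma aux_sqrt_add {a b : ℝ} (ha : 0 ≤ a) (hb : 0 ≤ b) :
    Real.sqrt (a + b) ≤ Real.sqrt a + Real.sqrt b := by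
  have h := Real.sqrt_le_sqrt (show a + b ≤ (Real.sqrt a + Real.sqrt b)^2 by
    nlinarith [Real.sq_sqrt ha, Real.sq_sqrt hb, Real.sqrt_nonneg a, Real.sqrt_nonneg b,
      mul_nonneg (Real.sqrt_nonneg a) (Real.sqrt_nonneg b)])
  rwa [Real.sqrt_sq (by positivity)] at h

lemma aux_sqrt_le_one_add {x : ℝ} (hx : 0 ≤ x) : Real.sqrt x ≤ 1 + x := by
  nlinarith [Real.sq_sqrt hx, Real.sqrt_nonneg x, sq_nonneg (Real.sqrt x - 1)]

lemma aux_rpow32 {x : ℝ} (hx : 0 < x) :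
    (x ^ ((3:ℝ)/2))⁻¹ = Real.sqrt x * (x ^ 2)⁻¹ := by
  have h2 : x ^ (2:ℕ) = x ^ ((2:ℕ):ℝ) := (Real.rpow_natCast x 2).symm
  rw [Real.sqrt_eq_rpow, h2, ← Real.rpow_neg hx.le, ← Real.rpow_neg hx.le,
    ← Real.rpow_add hx]
  norm_num

lemma aux_rpow12 {x y : ℝ} (hx : 0 ≤ x) (hy : 0 ≤ y) :
    (x * y ^ 2) ^ ((1:ℝ)/2) = Real.sqrt x * y := by
  rw [← Real.sqrt_eq_rpow, Real.sqrt_mul hx, Real.sqrt_sq hy]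

set_option maxHeartbeats 1000000 in
/-- Let `c > 0`, `M > 0`. There is a constant `C = C(c, M)` such that for
every `β ∈ (0,1]`, every `N`, every array `(ζ_{ij})` of mutually independent Bernoulli random
variables with parameters `q_{ij} ≤ cβ`, and all nonnegative random variables `b₁, …, b_N` with
`E[b_j⁴] ≤ M`, setting `Γ_{ij} = ζ_{ij} − q_{ij}`, one has
`(1/N) Σ_i E[((1/(Nβ)) Σ_j Γ_{ij} b_j)²] ≤ C ((Nβ)^{−3/2} + (Nβ)^{−1} + (Nβ²)^{−1/2})`. -/
theorem bernoulli_array_weighted_fluctuation_bound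
    (c M : ℝ) (hc : 0 < c) (hM : 0 < M) :
    ∃ C : ℝ, 0 < C ∧
      ∀ (β : ℝ), β ∈ Set.Ioc (0 : ℝ) 1 →
      ∀ (N : ℕ) (Ω : Type) [MeasurableSpace Ω] (P : Measure Ω) [IsProbabilityMeasure P]
        (ζ : Fin N × Fin N → Ω → ℝ) (q : Fin N → Fin N → ℝ) (b : Fin N → Ω → ℝ),
        (∀ p, Measurable (ζ p)) →
        (∀ i j, 0 ≤ q i j) → (∀ i j, q i j ≤ c * β) → (∀ i j, q i j ≤ 1) →
        (∀ p : Fin N × Fin N, Measure.map (ζ p) P =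
          ENNReal.ofReal (q p.1 p.2) • Measure.dirac (1 : ℝ) +
            ENNReal.ofReal (1 - q p.1 p.2) • Measure.dirac (0 : ℝ)) →
        iIndepFun ζ P →
        (∀ j, Measurable (b j)) → (∀ j ω, 0 ≤ b j ω) →
        (∀ j, Integrable (fun ω => b j ω ^ 4) P) →
        (∀ j, ∫ ω, b j ω ^ 4 ∂P ≤ M) →
        (N : ℝ)⁻¹ * ∑ i, ∫ ω,
            (((N : ℝ) * β)⁻¹ * ∑ j, (ζ (i, j) ω - q i j) * b j ω) ^ 2 ∂P ≤
          C * ((((N : ℝ) * β) ^ ((3 : ℝ) / 2))⁻¹ + ((N : ℝ) * β)⁻¹ +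
            (((N : ℝ) * β ^ 2) ^ ((1 : ℝ) / 2))⁻¹) := by
  classical
  refine ⟨(1+c)*(1+M), by positivity, ?_⟩
  rintro β ⟨hβ0, hβ1⟩ N Ω _ P _ ζ q b hζm hq0 hqcβ hq1 hlaw hind hbm hb0 hb4i hb4M
  rcases Nat.eq_zero_or_pos N with hN0 | hNpos
  · subst hN0
    simp [Real.zero_rpow (by norm_num : ((3:ℝ)/2) ≠ 0),
      Real.zero_rpow (by norm_num : ((1:ℝ)/2) ≠ 0)]
  have hn1 : (1:ℝ) ≤ (N:ℝ) := by exact_mod_cast hNpos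
  have hn0 : (0:ℝ) < (N:ℝ) := by linarith
  have hcβ : (0:ℝ) < c*β := by positivity
  have hx0 : (0:ℝ) < (N:ℝ)*β := by positivity
  -- moments
  have hm1 : ∀ (i j : Fin N), ∫ ω, (ζ (i,j) ω - q i j) ∂P = 0 := by
    intro i j
    have h := aux_bern_integral (P := P) (hζm (i,j)) (hq0 i j) (hq1 i j) (hlaw (i,j))
      (fun x => x - q i j) (by fun_prop)
    rw [h]; ring
  have hm2ub : ∀ (i j : Fin N), ∫ ω, (ζ (i,j) ω - q i j)^2 ∂P ≤ c*β := by
    intro i j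
    have h := aux_bern_integral (P := P) (hζm (i,j)) (hq0 i j) (hq1 i j) (hlaw (i,j))
      (fun x => (x - q i j)^2) (by fun_prop)
    rw [h]
    have h0 := hq0 i j; have h1 := hq1 i j; have h2 := hqcβ i j
    nlinarith [sq_nonneg (q i j), sq_nonneg (1 - q i j), mul_nonneg h0 (sub_nonneg.2 h1)]
  have hm2lb : ∀ (i j : Fin N), 0 ≤ ∫ ω, (ζ (i,j) ω - q i j)^2 ∂P :=
    fun i j => integral_nonneg (fun ω => sq_nonneg _)
  have hm4ub : ∀ (i j : Fin N), ∫ ω, (ζ (i,j) ω - q i j)^4 ∂P ≤ c*β := by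
    intro i j
    have h := aux_bern_integral (P := P) (hζm (i,j)) (hq0 i j) (hq1 i j) (hlaw (i,j))
      (fun x => (x - q i j)^4) (by fun_prop)
    rw [h]
    have h0 := hq0 i j; have h1 := hq1 i j; have h2 := hqcβ i j
    nlinarith [sq_nonneg (q i j), sq_nonneg (1 - q i j),
      mul_nonneg h0 (sub_nonneg.2 h1), sq_nonneg (q i j * (1 - q i j)),
      mul_nonneg (mul_nonneg h0 h0) (sub_nonneg.2 h1),
      mul_nonneg (mul_nonneg (sub_nonneg.2 h1) (sub_nonneg.2 h1)) h0]
  have hae : ∀ p : Fin N × Fin N, ∀ᵐ ω ∂P, |ζ p ω - q p.1 p.2| ≤ 1 := by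
    intro p
    filter_upwards [aux_bern_ae (hζm p) (hlaw p)] with ω hω
    have h0 := hq0 p.1 p.2; have h1 := hq1 p.1 p.2
    rcases hω with h | h <;> rw [h, abs_le] <;> constructor <;> linarith
  -- integrability of b-products
  have hb2 : ∀ j, Integrable (fun ω => b j ω^2) P := by
    intro j
    refine ((integrable_const (1:ℝ)).add (hb4i j)).mono'
      ((hbm j).pow_const 2).aestronglyMeasurable ?_
    filter_upwards with ω
    rw [Real.norm_eq_abs, abs_of_nonneg (by positivity)]
    simp only [Pi.add_apply]
    nlinarith [sq_nonneg (b j ω^2 - 1)]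
  have hbb2 : ∀ j k, Integrable (fun ω => (b j ω * b k ω)^2) P := by
    intro j k
    refine (((hb4i j).add (hb4i k)).div_const 2).mono'
      (((hbm j).mul (hbm k)).pow_const 2).aestronglyMeasurable ?_
    filter_upwards with ω
    rw [Real.norm_eq_abs, abs_of_nonneg (by positivity)]
    simp only [Pi.add_apply]
    nlinarith [sq_nonneg (b j ω^2 - b k ω^2)]
  have hbb2M : ∀ j k, ∫ ω, (b j ω * b k ω)^2 ∂P ≤ M := by
    intro j k
    have hint2 : Integrable (fun ω => (b j ω^4 + b k ω^4)/2) P :=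
      ((hb4i j).add (hb4i k)).div_const 2
    have hle : ∫ ω, (b j ω * b k ω)^2 ∂P ≤ ∫ ω, (b j ω^4 + b k ω^4)/2 ∂P := by
      refine integral_mono (hbb2 j k) hint2 ?_
      intro ω
      nlinarith [sq_nonneg (b j ω^2 - b k ω^2)]
    rw [integral_div, integral_add (hb4i j) (hb4i k)] at hle
    have := hb4M j; have := hb4M k
    linarith
  have hbb1 : ∀ j k, Integrable (fun ω => b j ω * b k ω) P := by
    intro j k
    refine ((integrable_const (1:ℝ)).add (hbb2 j k)).mono'
      ((hbm j).mul (hbm k)).aestronglyMeasurable ?_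
    filter_upwards with ω
    rw [Real.norm_eq_abs, abs_of_nonneg (mul_nonneg (hb0 j ω) (hb0 k ω))]
    simp only [Pi.add_apply]
    nlinarith [sq_nonneg (b j ω * b k ω - 1), mul_nonneg (hb0 j ω) (hb0 k ω)]
  have hIjk : ∀ (i j k : Fin N),
      Integrable (fun ω => (ζ (i,j) ω - q i j) * b j ω * ((ζ (i,k) ω - q i k) * b k ω)) P := by
    intro i j k
    refine (hbb1 j k).mono'
      ((((hζm (i,j)).sub measurable_const).mul (hbm j)).mul
        (((hζm (i,k)).sub measurable_const).mul (hbm k))).aestronglyMeasurable ?_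
    filter_upwards [hae (i,j), hae (i,k)] with ω h1 h2
    have h1' : |ζ (i,j) ω - q i j| ≤ 1 := h1
    have h2' : |ζ (i,k) ω - q i k| ≤ 1 := h2
    have hbj := hb0 j ω; have hbk := hb0 k ω
    rw [Real.norm_eq_abs, abs_mul, abs_mul, abs_mul, abs_of_nonneg hbj, abs_of_nonneg hbk]
    refine mul_le_mul ?_ ?_ (mul_nonneg (abs_nonneg _) hbk) hbj
    · nlinarith [abs_nonneg (ζ (i,j) ω - q i j)]
    · nlinarith [abs_nonneg (ζ (i,k) ω - q i k)]
  have hSm : ∀ j k : Fin N,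
      Measurable (fun ω => ∑ i, (ζ (i,j) ω - q i j) * (ζ (i,k) ω - q i k)) := by
    intro j k
    exact Finset.measurable_sum _ (fun i _ =>
      ((hζm (i,j)).sub measurable_const).mul ((hζm (i,k)).sub measurable_const))
  have hSae : ∀ j k : Fin N, ∀ᵐ ω ∂P,
      |∑ i, (ζ (i,j) ω - q i j) * (ζ (i,k) ω - q i k)| ≤ (N:ℝ) := by
    intro j k
    filter_upwards [ae_all_iff.2 (fun p : Fin N × Fin N => hae p)] with ω hω
    calc |∑ i, (ζ (i,j) ω - q i j) * (ζ (i,k) ω - q i k)|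
        ≤ ∑ i, |(ζ (i,j) ω - q i j) * (ζ (i,k) ω - q i k)| := Finset.abs_sum_le_sum_abs _ _
      _ ≤ ∑ _i : Fin N, (1:ℝ) := by
          refine Finset.sum_le_sum (fun i _ => ?_)
          rw [abs_mul]
          have ha : |ζ (i,j) ω - q i j| ≤ 1 := hω (i,j)
          have hb : |ζ (i,k) ω - q i k| ≤ 1 := hω (i,k)
          nlinarith [abs_nonneg (ζ (i,j) ω - q i j), abs_nonneg (ζ (i,k) ω - q i k)]
      _ = (N:ℝ) := by simp
  have hS2int : ∀ j k : Fin N,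
      Integrable (fun ω => (∑ i, (ζ (i,j) ω - q i j) * (ζ (i,k) ω - q i k))^2) P := by
    intro j k
    refine (integrable_const ((N:ℝ)^2)).mono' ((hSm j k).pow_const 2).aestronglyMeasurable ?_
    filter_upwards [hSae j k] with ω h
    rw [Real.norm_eq_abs, abs_of_nonneg (sq_nonneg _)]
    nlinarith [abs_nonneg (∑ i, (ζ (i,j) ω - q i j) * (ζ (i,k) ω - q i k)),
      sq_abs (∑ i, (ζ (i,j) ω - q i j) * (ζ (i,k) ω - q i k))]
  have hSbb : ∀ j k : Fin N,
      Integrable (fun ω => (∑ i, (ζ (i,j) ω - q i j) * (ζ (i,k) ω - q i k)) * (b j ω * b k ω)) P := by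
    intro j k
    refine ((hbb1 j k).const_mul (N:ℝ)).mono'
      ((hSm j k).mul ((hbm j).mul (hbm k))).aestronglyMeasurable ?_
    filter_upwards [hSae j k] with ω h
    rw [Real.norm_eq_abs, abs_mul, abs_of_nonneg (mul_nonneg (hb0 j ω) (hb0 k ω))]
    exact mul_le_mul_of_nonneg_right h (mul_nonneg (hb0 j ω) (hb0 k ω))
  have h4int : ∀ (i l j k : Fin N),
      Integrable (fun ω => ((ζ (i,j) ω - q i j) * (ζ (i,k) ω - q i k)) *
        ((ζ (l,j) ω - q l j) * (ζ (l,k) ω - q l k))) P := by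
    intro i l j k
    refine (integrable_const (1:ℝ)).mono'
      ((((hζm (i,j)).sub measurable_const).mul ((hζm (i,k)).sub measurable_const)).mul
        (((hζm (l,j)).sub measurable_const).mul ((hζm (l,k)).sub measurable_const))).aestronglyMeasurable ?_
    filter_upwards [hae (i,j), hae (i,k), hae (l,j), hae (l,k)] with ω h1 h2 h3 h4
    have h1' : |ζ (i,j) ω - q i j| ≤ 1 := h1
    have h2' : |ζ (i,k) ω - q i k| ≤ 1 := h2
    have h3' : |ζ (l,j) ω - q l j| ≤ 1 := h3
    have h4' : |ζ (l,k) ω - q l k| ≤ 1 := h4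
    rw [Real.norm_eq_abs, abs_mul, abs_mul, abs_mul]
    exact mul_le_one₀ (mul_le_one₀ h1' (abs_nonneg _) h2')
      (mul_nonneg (abs_nonneg _) (abs_nonneg _)) (mul_le_one₀ h3' (abs_nonneg _) h4')
  -- independence consequences
  have hfac : ∀ (p p' : Fin N × Fin N), p ≠ p' → ∀ (φ ψ : ℝ → ℝ), Measurable φ → Measurable ψ →
      ∫ ω, φ (ζ p ω) * ψ (ζ p' ω) ∂P = (∫ ω, φ (ζ p ω) ∂P) * ∫ ω, ψ (ζ p' ω) ∂P := by
    intro p p' hpp' φ ψ hφ hψ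
    exact ((hind.indepFun hpp').comp hφ hψ).integral_mul_eq_mul_integral
      (hφ.comp (hζm p)).aestronglyMeasurable (hψ.comp (hζm p')).aestronglyMeasurable
  have hfac4 : ∀ (i l j k : Fin N), i ≠ l →
      ∫ ω, ((ζ (i,j) ω - q i j) * (ζ (i,k) ω - q i k)) *
          ((ζ (l,j) ω - q l j) * (ζ (l,k) ω - q l k)) ∂P =
      (∫ ω, (ζ (i,j) ω - q i j) * (ζ (i,k) ω - q i k) ∂P) *
        ∫ ω, (ζ (l,j) ω - q l j) * (ζ (l,k) ω - q l k) ∂P := by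
    intro i l j k hil
    have hX := hind.indepFun_prodMk_prodMk hζm (i,j) (i,k) (l,j) (l,k)
      (fun h => hil (congrArg Prod.fst h)) (fun h => hil (congrArg Prod.fst h))
      (fun h => hil (congrArg Prod.fst h)) (fun h => hil (congrArg Prod.fst h))
    have hφ : Measurable (fun v : ℝ × ℝ => (v.1 - q i j) * (v.2 - q i k)) := by fun_prop
    have hψ : Measurable (fun v : ℝ × ℝ => (v.1 - q l j) * (v.2 - q l k)) := by fun_prop
    exact (hX.comp hφ hψ).integral_mul_eq_mul_integral
      (hφ.comp ((hζm (i,j)).prodMk (hζm (i,k)))).aestronglyMeasurable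
      (hψ.comp ((hζm (l,j)).prodMk (hζm (l,k)))).aestronglyMeasurable
  -- bounds on the four-fold products
  have hTdiag2 : ∀ (i j : Fin N),
      ∫ ω, ((ζ (i,j) ω - q i j) * (ζ (i,j) ω - q i j)) *
        ((ζ (i,j) ω - q i j) * (ζ (i,j) ω - q i j)) ∂P ≤ c*β := by
    intro i j
    have h : (fun ω => ((ζ (i,j) ω - q i j) * (ζ (i,j) ω - q i j)) *
        ((ζ (i,j) ω - q i j) * (ζ (i,j) ω - q i j))) = fun ω => (ζ (i,j) ω - q i j)^4 := by
      funext ω; ring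
    rw [h]; exact hm4ub i j
  have hTdiag : ∀ (i j k : Fin N), j ≠ k →
      ∫ ω, ((ζ (i,j) ω - q i j) * (ζ (i,k) ω - q i k)) *
        ((ζ (i,j) ω - q i j) * (ζ (i,k) ω - q i k)) ∂P ≤ (c*β)^2 := by
    intro i j k hjk
    have hne : ((i,j) : Fin N × Fin N) ≠ (i,k) := fun h => hjk (congrArg Prod.snd h)
    have h := hfac (i,j) (i,k) hne (fun x => (x - q i j)^2) (fun x => (x - q i k)^2)
      (by fun_prop) (by fun_prop)
    have hrw : (fun ω => ((ζ (i,j) ω - q i j) * (ζ (i,k) ω - q i k)) *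
        ((ζ (i,j) ω - q i j) * (ζ (i,k) ω - q i k))) =
        fun ω => (ζ (i,j) ω - q i j)^2 * (ζ (i,k) ω - q i k)^2 := by
      funext ω; ring
    rw [hrw, h, sq]
    exact mul_le_mul (hm2ub i j) (hm2ub i k) (hm2lb i k) hcβ.le
  have hpair0 : ∀ (i j k : Fin N), j ≠ k →
      ∫ ω, (ζ (i,j) ω - q i j) * (ζ (i,k) ω - q i k) ∂P = 0 := by
    intro i j k hjk
    have hne : ((i,j) : Fin N × Fin N) ≠ (i,k) := fun h => hjk (congrArg Prod.snd h)
    have h := hfac (i,j) (i,k) hne (fun x => x - q i j) (fun x => x - q i k)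
      (by fun_prop) (by fun_prop)
    rw [h, hm1 i j, zero_mul]
  have hToff : ∀ (i l j k : Fin N), i ≠ l → j ≠ k →
      ∫ ω, ((ζ (i,j) ω - q i j) * (ζ (i,k) ω - q i k)) *
        ((ζ (l,j) ω - q l j) * (ζ (l,k) ω - q l k)) ∂P = 0 := by
    intro i l j k hil hjk
    rw [hfac4 i l j k hil, hpair0 i j k hjk, zero_mul]
  have hsq' : ∀ (i j : Fin N), ∫ ω, (ζ (i,j) ω - q i j) * (ζ (i,j) ω - q i j) ∂P =
      ∫ ω, (ζ (i,j) ω - q i j)^2 ∂P := by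
    intro i j
    congr 1; funext ω; ring
  have hToffdiag : ∀ (i l j : Fin N), i ≠ l →
      ∫ ω, ((ζ (i,j) ω - q i j) * (ζ (i,j) ω - q i j)) *
        ((ζ (l,j) ω - q l j) * (ζ (l,j) ω - q l j)) ∂P ≤ (c*β)^2 := by
    intro i l j hil
    rw [hfac4 i l j j hil, hsq' i j, hsq' l j, sq]
    exact mul_le_mul (hm2ub i j) (hm2ub l j) (hm2lb l j) hcβ.le
  -- expansion of the square of S
  have hS2exp : ∀ j k : Fin N,
      ∫ ω, (∑ i, (ζ (i,j) ω - q i j) * (ζ (i,k) ω - q i k))^2 ∂P =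
      ∑ i, ∑ l, ∫ ω, ((ζ (i,j) ω - q i j) * (ζ (i,k) ω - q i k)) *
        ((ζ (l,j) ω - q l j) * (ζ (l,k) ω - q l k)) ∂P := by
    intro j k
    have hrw : ∀ ω : Ω, (∑ i, (ζ (i,j) ω - q i j) * (ζ (i,k) ω - q i k))^2 =
        ∑ i, ∑ l, ((ζ (i,j) ω - q i j) * (ζ (i,k) ω - q i k)) *
          ((ζ (l,j) ω - q l j) * (ζ (l,k) ω - q l k)) := by
      intro ω; rw [sq, Finset.sum_mul_sum]
    simp_rw [hrw]
    rw [integral_finset_sum _ (fun i _ => integrable_finset_sum _ (fun l _ => h4int i l j k))]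
    exact Finset.sum_congr rfl fun i _ => integral_finset_sum _ (fun l _ => h4int i l j k)
  have hcard : ((Finset.univ.erase (α := Fin N)) : Fin N → Finset (Fin N)) = fun i => Finset.univ.erase i := rfl
  have hVdiag : ∀ j : Fin N,
      ∫ ω, (∑ i, (ζ (i,j) ω - q i j) * (ζ (i,j) ω - q i j))^2 ∂P ≤
        (N:ℝ)*(c*β) + (N:ℝ)^2*(c*β)^2 := by
    intro j
    rw [hS2exp j j]
    have hbnd : ∀ i : Fin N, ∑ l, ∫ ω, ((ζ (i,j) ω - q i j) * (ζ (i,j) ω - q i j)) *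
        ((ζ (l,j) ω - q l j) * (ζ (l,j) ω - q l j)) ∂P ≤ (c*β) + (N:ℝ)*(c*β)^2 := by
      intro i
      rw [← Finset.add_sum_erase _ _ (Finset.mem_univ i)]
      have h2 : ∑ l ∈ Finset.univ.erase i, ∫ ω, ((ζ (i,j) ω - q i j) * (ζ (i,j) ω - q i j)) *
          ((ζ (l,j) ω - q l j) * (ζ (l,j) ω - q l j)) ∂P ≤ (N:ℝ)*(c*β)^2 := by
        calc ∑ l ∈ Finset.univ.erase i, ∫ ω, ((ζ (i,j) ω - q i j) * (ζ (i,j) ω - q i j)) *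
              ((ζ (l,j) ω - q l j) * (ζ (l,j) ω - q l j)) ∂P
            ≤ ∑ _l ∈ Finset.univ.erase i, (c*β)^2 :=
              Finset.sum_le_sum (fun l hl =>
                hToffdiag i l j (fun h => (Finset.ne_of_mem_erase hl) h.symm))
          _ = ((Finset.univ.erase i).card : ℝ) * (c*β)^2 := by
              rw [Finset.sum_const, nsmul_eq_mul]
          _ ≤ (N:ℝ) * (c*β)^2 := by
              refine mul_le_mul_of_nonneg_right ?_ (by positivity)
              have h := Finset.card_erase_le (s := (Finset.univ : Finset (Fin N))) (a := i)
              have : ((Finset.univ : Finset (Fin N)).card) = N := by simp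
              exact_mod_cast this ▸ h
      linarith [hTdiag2 i j]
    calc ∑ i, ∑ l, ∫ ω, ((ζ (i,j) ω - q i j) * (ζ (i,j) ω - q i j)) *
          ((ζ (l,j) ω - q l j) * (ζ (l,j) ω - q l j)) ∂P
        ≤ ∑ _i : Fin N, ((c*β) + (N:ℝ)*(c*β)^2) := Finset.sum_le_sum (fun i _ => hbnd i)
      _ = (N:ℝ) * ((c*β) + (N:ℝ)*(c*β)^2) := by
          rw [Finset.sum_const, nsmul_eq_mul, Finset.card_univ, Fintype.card_fin]
      _ = (N:ℝ)*(c*β) + (N:ℝ)^2*(c*β)^2 := by ring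
  have hVoff : ∀ j k : Fin N, j ≠ k →
      ∫ ω, (∑ i, (ζ (i,j) ω - q i j) * (ζ (i,k) ω - q i k))^2 ∂P ≤ (N:ℝ)*(c*β)^2 := by
    intro j k hjk
    rw [hS2exp j k]
    calc ∑ i, ∑ l, ∫ ω, ((ζ (i,j) ω - q i j) * (ζ (i,k) ω - q i k)) *
          ((ζ (l,j) ω - q l j) * (ζ (l,k) ω - q l k)) ∂P
        ≤ ∑ _i : Fin N, (c*β)^2 := by
          refine Finset.sum_le_sum (fun i _ => ?_)
          rw [← Finset.add_sum_erase _ _ (Finset.mem_univ i)]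
          have h2 : ∑ l ∈ Finset.univ.erase i, ∫ ω, ((ζ (i,j) ω - q i j) * (ζ (i,k) ω - q i k)) *
              ((ζ (l,j) ω - q l j) * (ζ (l,k) ω - q l k)) ∂P = 0 :=
            Finset.sum_eq_zero (fun l hl =>
              hToff i l j k (fun h => (Finset.ne_of_mem_erase hl) h.symm) hjk)
          rw [h2, add_zero]
          exact hTdiag i j k hjk
      _ = (N:ℝ) * (c*β)^2 := by rw [Finset.sum_const, nsmul_eq_mul, Finset.card_univ, Fintype.card_fin]
  -- expansion of the weighted sums
  have hstep1 : ∀ i : Fin N, ∫ ω, (∑ j, (ζ (i,j) ω - q i j) * b j ω)^2 ∂P =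
      ∑ j, ∑ k, ∫ ω, (ζ (i,j) ω - q i j) * b j ω * ((ζ (i,k) ω - q i k) * b k ω) ∂P := by
    intro i
    have hrw : ∀ ω : Ω, (∑ j, (ζ (i,j) ω - q i j) * b j ω)^2 =
        ∑ j, ∑ k, (ζ (i,j) ω - q i j) * b j ω * ((ζ (i,k) ω - q i k) * b k ω) := by
      intro ω; rw [sq, Finset.sum_mul_sum]
    simp_rw [hrw]
    rw [integral_finset_sum _ (fun j _ => integrable_finset_sum _ (fun k _ => hIjk i j k))]
    exact Finset.sum_congr rfl fun j _ => integral_finset_sum _ (fun k _ => hIjk i j k)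
  have hstep2 : ∀ j k : Fin N,
      ∑ i, ∫ ω, (ζ (i,j) ω - q i j) * b j ω * ((ζ (i,k) ω - q i k) * b k ω) ∂P =
      ∫ ω, (∑ i, (ζ (i,j) ω - q i j) * (ζ (i,k) ω - q i k)) * (b j ω * b k ω) ∂P := by
    intro j k
    rw [← integral_finset_sum _ (fun i _ => hIjk i j k)]
    congr 1; funext ω
    rw [Finset.sum_mul]
    exact Finset.sum_congr rfl fun i _ => by ring
  have hCSjk : ∀ j k : Fin N,
      ∫ ω, (∑ i, (ζ (i,j) ω - q i j) * (ζ (i,k) ω - q i k)) * (b j ω * b k ω) ∂P ≤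
      Real.sqrt (∫ ω, (∑ i, (ζ (i,j) ω - q i j) * (ζ (i,k) ω - q i k))^2 ∂P) * Real.sqrt M := by
    intro j k
    refine (aux_cauchy_schwarz (hSm j k).aestronglyMeasurable
      ((hbm j).mul (hbm k)).aestronglyMeasurable (hS2int j k) (hbb2 j k)).trans ?_
    exact mul_le_mul_of_nonneg_left (Real.sqrt_le_sqrt (hbb2M j k)) (Real.sqrt_nonneg _)
  -- putting everything together
  have hAbound : ∑ i, ∫ ω, (∑ j, (ζ (i,j) ω - q i j) * b j ω)^2 ∂P ≤
      (N:ℝ) * (Real.sqrt ((N:ℝ)*(c*β) + (N:ℝ)^2*(c*β)^2) * Real.sqrt M) +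
      (N:ℝ)^2 * (Real.sqrt ((N:ℝ)*(c*β)^2) * Real.sqrt M) := by
    have h1 : ∑ i, ∫ ω, (∑ j, (ζ (i,j) ω - q i j) * b j ω)^2 ∂P =
        ∑ j, ∑ k, ∫ ω, (∑ i, (ζ (i,j) ω - q i j) * (ζ (i,k) ω - q i k)) * (b j ω * b k ω) ∂P := by
      calc ∑ i, ∫ ω, (∑ j, (ζ (i,j) ω - q i j) * b j ω)^2 ∂P
          = ∑ i, ∑ j, ∑ k, ∫ ω, (ζ (i,j) ω - q i j) * b j ω * ((ζ (i,k) ω - q i k) * b k ω) ∂P :=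
            Finset.sum_congr rfl fun i _ => hstep1 i
        _ = ∑ j, ∑ k, ∑ i, ∫ ω, (ζ (i,j) ω - q i j) * b j ω * ((ζ (i,k) ω - q i k) * b k ω) ∂P := by
            rw [Finset.sum_comm]
            exact Finset.sum_congr rfl fun j _ => Finset.sum_comm
        _ = ∑ j, ∑ k, ∫ ω, (∑ i, (ζ (i,j) ω - q i j) * (ζ (i,k) ω - q i k)) * (b j ω * b k ω) ∂P :=
            Finset.sum_congr rfl fun j _ => Finset.sum_congr rfl fun k _ => hstep2 j k
    rw [h1]
    have hperj : ∀ j : Fin N,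
        ∑ k, ∫ ω, (∑ i, (ζ (i,j) ω - q i j) * (ζ (i,k) ω - q i k)) * (b j ω * b k ω) ∂P ≤
        Real.sqrt ((N:ℝ)*(c*β) + (N:ℝ)^2*(c*β)^2) * Real.sqrt M +
          (N:ℝ) * (Real.sqrt ((N:ℝ)*(c*β)^2) * Real.sqrt M) := by
      intro j
      rw [← Finset.add_sum_erase _ _ (Finset.mem_univ j)]
      have hd : ∫ ω, (∑ i, (ζ (i,j) ω - q i j) * (ζ (i,j) ω - q i j)) * (b j ω * b j ω) ∂P ≤
          Real.sqrt ((N:ℝ)*(c*β) + (N:ℝ)^2*(c*β)^2) * Real.sqrt M :=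
        (hCSjk j j).trans (mul_le_mul_of_nonneg_right
          (Real.sqrt_le_sqrt (hVdiag j)) (Real.sqrt_nonneg M))
      have ho : ∑ k ∈ Finset.univ.erase j,
          ∫ ω, (∑ i, (ζ (i,j) ω - q i j) * (ζ (i,k) ω - q i k)) * (b j ω * b k ω) ∂P ≤
          (N:ℝ) * (Real.sqrt ((N:ℝ)*(c*β)^2) * Real.sqrt M) := by
        calc ∑ k ∈ Finset.univ.erase j,
              ∫ ω, (∑ i, (ζ (i,j) ω - q i j) * (ζ (i,k) ω - q i k)) * (b j ω * b k ω) ∂P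
            ≤ ∑ _k ∈ Finset.univ.erase j, Real.sqrt ((N:ℝ)*(c*β)^2) * Real.sqrt M :=
              Finset.sum_le_sum (fun k hk => (hCSjk j k).trans
                (mul_le_mul_of_nonneg_right
                  (Real.sqrt_le_sqrt (hVoff j k (fun h => (Finset.ne_of_mem_erase hk) h.symm)))
                  (Real.sqrt_nonneg M)))
          _ = ((Finset.univ.erase j).card : ℝ) * (Real.sqrt ((N:ℝ)*(c*β)^2) * Real.sqrt M) := by
              rw [Finset.sum_const, nsmul_eq_mul]
          _ ≤ (N:ℝ) * (Real.sqrt ((N:ℝ)*(c*β)^2) * Real.sqrt M) := by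
              refine mul_le_mul_of_nonneg_right ?_ (by positivity)
              have h := Finset.card_erase_le (s := (Finset.univ : Finset (Fin N))) (a := j)
              have hcu : ((Finset.univ : Finset (Fin N)).card) = N := by simp
              exact_mod_cast hcu ▸ h
      linarith
    calc ∑ j, ∑ k, ∫ ω, (∑ i, (ζ (i,j) ω - q i j) * (ζ (i,k) ω - q i k)) * (b j ω * b k ω) ∂P
        ≤ ∑ _j : Fin N, (Real.sqrt ((N:ℝ)*(c*β) + (N:ℝ)^2*(c*β)^2) * Real.sqrt M +
            (N:ℝ) * (Real.sqrt ((N:ℝ)*(c*β)^2) * Real.sqrt M)) :=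
          Finset.sum_le_sum (fun j _ => hperj j)
      _ = (N:ℝ) * (Real.sqrt ((N:ℝ)*(c*β) + (N:ℝ)^2*(c*β)^2) * Real.sqrt M +
            (N:ℝ) * (Real.sqrt ((N:ℝ)*(c*β)^2) * Real.sqrt M)) := by
          rw [Finset.sum_const, nsmul_eq_mul, Finset.card_univ, Fintype.card_fin]
      _ = (N:ℝ) * (Real.sqrt ((N:ℝ)*(c*β) + (N:ℝ)^2*(c*β)^2) * Real.sqrt M) +
            (N:ℝ)^2 * (Real.sqrt ((N:ℝ)*(c*β)^2) * Real.sqrt M) := by ring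
  -- rewrite the goal
  have hgoal : (N:ℝ)⁻¹ * ∑ i, ∫ ω,
      (((N:ℝ)*β)⁻¹ * ∑ j, (ζ (i,j) ω - q i j) * b j ω)^2 ∂P =
      (N:ℝ)⁻¹ * ((((N:ℝ)*β)^2)⁻¹ * ∑ i, ∫ ω, (∑ j, (ζ (i,j) ω - q i j) * b j ω)^2 ∂P) := by
    have hper : ∀ i : Fin N, ∫ ω, (((N:ℝ)*β)⁻¹ * ∑ j, (ζ (i,j) ω - q i j) * b j ω)^2 ∂P =
        (((N:ℝ)*β)^2)⁻¹ * ∫ ω, (∑ j, (ζ (i,j) ω - q i j) * b j ω)^2 ∂P := by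
      intro i
      have hfun : (fun ω => (((N:ℝ)*β)⁻¹ * ∑ j, (ζ (i,j) ω - q i j) * b j ω)^2)
          = fun ω => (((N:ℝ)*β)^2)⁻¹ * (∑ j, (ζ (i,j) ω - q i j) * b j ω)^2 := by
        funext ω; rw [mul_pow, inv_pow]
      rw [hfun]
      exact integral_const_mul _ _
    rw [Finset.sum_congr rfl (fun i _ => hper i), ← Finset.mul_sum]
  rw [hgoal]
  have hpref : (0:ℝ) ≤ (N:ℝ)⁻¹ * (((N:ℝ)*β)^2)⁻¹ := by positivity
  -- final arithmetic
  have hmain : (N:ℝ)⁻¹ * ((((N:ℝ)*β)^2)⁻¹ *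
      ((N:ℝ) * (Real.sqrt ((N:ℝ)*(c*β) + (N:ℝ)^2*(c*β)^2) * Real.sqrt M) +
       (N:ℝ)^2 * (Real.sqrt ((N:ℝ)*(c*β)^2) * Real.sqrt M))) ≤
      (1+c)*(1+M) * ((((N:ℝ)*β) ^ ((3:ℝ)/2))⁻¹ + ((N:ℝ)*β)⁻¹ +
        (((N:ℝ)*β^2) ^ ((1:ℝ)/2))⁻¹) := by
    have hv : (0:ℝ) ≤ Real.sqrt M := Real.sqrt_nonneg M
    have hne : (N:ℝ) ≠ 0 := ne_of_gt hn0
    have hβne : β ≠ 0 := ne_of_gt hβ0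
    have hsne : Real.sqrt (N:ℝ) ≠ 0 := by positivity
    have hss : Real.sqrt (N:ℝ) * Real.sqrt (N:ℝ) = (N:ℝ) := Real.mul_self_sqrt hn0.le
    have hxne : (N:ℝ)*β ≠ 0 := ne_of_gt hx0
    have hs1 : Real.sqrt ((N:ℝ)*(c*β) + (N:ℝ)^2*(c*β)^2) ≤
        Real.sqrt ((N:ℝ)*β) * Real.sqrt c + (N:ℝ)*(c*β) := by
      calc Real.sqrt ((N:ℝ)*(c*β) + (N:ℝ)^2*(c*β)^2)
          ≤ Real.sqrt ((N:ℝ)*(c*β)) + Real.sqrt ((N:ℝ)^2*(c*β)^2) :=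
            aux_sqrt_add (by positivity) (by positivity)
        _ = Real.sqrt ((N:ℝ)*β) * Real.sqrt c + (N:ℝ)*(c*β) := by
            rw [show (N:ℝ)^2*(c*β)^2 = ((N:ℝ)*(c*β))^2 by ring, Real.sqrt_sq (by positivity),
              show (N:ℝ)*(c*β) = ((N:ℝ)*β)*c by ring, Real.sqrt_mul (by positivity)]
    have hs2 : Real.sqrt ((N:ℝ)*(c*β)^2) = Real.sqrt (N:ℝ) * (c*β) := by
      rw [Real.sqrt_mul hn0.le, Real.sqrt_sq hcβ.le]
    have hcoef1 : Real.sqrt c * Real.sqrt M ≤ (1+c)*(1+M) :=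
      mul_le_mul (aux_sqrt_le_one_add hc.le) (aux_sqrt_le_one_add hM.le)
        (Real.sqrt_nonneg M) (by positivity)
    have hcoef2 : c * Real.sqrt M ≤ (1+c)*(1+M) :=
      mul_le_mul (by linarith) (aux_sqrt_le_one_add hM.le) (Real.sqrt_nonneg M) (by positivity)
    have h1 : (N:ℝ)⁻¹ * ((((N:ℝ)*β)^2)⁻¹ * ((N:ℝ) * ((Real.sqrt ((N:ℝ)*β) * Real.sqrt c) * Real.sqrt M))) ≤
        (1+c)*(1+M) * ((((N:ℝ)*β) ^ ((3:ℝ)/2))⁻¹) := by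
      rw [aux_rpow32 hx0]
      calc (N:ℝ)⁻¹ * ((((N:ℝ)*β)^2)⁻¹ * ((N:ℝ) * ((Real.sqrt ((N:ℝ)*β) * Real.sqrt c) * Real.sqrt M)))
          = (Real.sqrt c * Real.sqrt M) * (Real.sqrt ((N:ℝ)*β) * (((N:ℝ)*β)^2)⁻¹) := by
            field_simp
        _ ≤ ((1+c)*(1+M)) * (Real.sqrt ((N:ℝ)*β) * (((N:ℝ)*β)^2)⁻¹) :=
            mul_le_mul_of_nonneg_right hcoef1 (by positivity)
    have h2 : (N:ℝ)⁻¹ * ((((N:ℝ)*β)^2)⁻¹ * ((N:ℝ) * (((N:ℝ)*(c*β)) * Real.sqrt M))) ≤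
        (1+c)*(1+M) * (((N:ℝ)*β)⁻¹) := by
      calc (N:ℝ)⁻¹ * ((((N:ℝ)*β)^2)⁻¹ * ((N:ℝ) * (((N:ℝ)*(c*β)) * Real.sqrt M)))
          = (c * Real.sqrt M) * (((N:ℝ)*β)⁻¹) := by field_simp
        _ ≤ ((1+c)*(1+M)) * (((N:ℝ)*β)⁻¹) :=
            mul_le_mul_of_nonneg_right hcoef2 (by positivity)
    have h3 : (N:ℝ)⁻¹ * ((((N:ℝ)*β)^2)⁻¹ * ((N:ℝ)^2 * ((Real.sqrt (N:ℝ) * (c*β)) * Real.sqrt M))) ≤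
        (1+c)*(1+M) * ((((N:ℝ)*β^2) ^ ((1:ℝ)/2))⁻¹) := by
      rw [aux_rpow12 hn0.le hβ0.le]
      calc (N:ℝ)⁻¹ * ((((N:ℝ)*β)^2)⁻¹ * ((N:ℝ)^2 * ((Real.sqrt (N:ℝ) * (c*β)) * Real.sqrt M)))
          = (c * Real.sqrt M) * ((Real.sqrt (N:ℝ) * β)⁻¹) := by
            field_simp
            linear_combination hss
        _ ≤ ((1+c)*(1+M)) * ((Real.sqrt (N:ℝ) * β)⁻¹) :=
            mul_le_mul_of_nonneg_right hcoef2 (by positivity)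
    calc (N:ℝ)⁻¹ * ((((N:ℝ)*β)^2)⁻¹ *
        ((N:ℝ) * (Real.sqrt ((N:ℝ)*(c*β) + (N:ℝ)^2*(c*β)^2) * Real.sqrt M) +
         (N:ℝ)^2 * (Real.sqrt ((N:ℝ)*(c*β)^2) * Real.sqrt M)))
        ≤ (N:ℝ)⁻¹ * ((((N:ℝ)*β)^2)⁻¹ *
          ((N:ℝ) * ((Real.sqrt ((N:ℝ)*β) * Real.sqrt c + (N:ℝ)*(c*β)) * Real.sqrt M) +
           (N:ℝ)^2 * ((Real.sqrt (N:ℝ) * (c*β)) * Real.sqrt M))) := by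
          rw [hs2]
          gcongr
      _ = (N:ℝ)⁻¹ * ((((N:ℝ)*β)^2)⁻¹ * ((N:ℝ) * ((Real.sqrt ((N:ℝ)*β) * Real.sqrt c) * Real.sqrt M))) +
          (N:ℝ)⁻¹ * ((((N:ℝ)*β)^2)⁻¹ * ((N:ℝ) * (((N:ℝ)*(c*β)) * Real.sqrt M))) +
          (N:ℝ)⁻¹ * ((((N:ℝ)*β)^2)⁻¹ * ((N:ℝ)^2 * ((Real.sqrt (N:ℝ) * (c*β)) * Real.sqrt M))) := by
          ring
      _ ≤ (1+c)*(1+M) * ((((N:ℝ)*β) ^ ((3:ℝ)/2))⁻¹) + (1+c)*(1+M) * (((N:ℝ)*β)⁻¹) +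
          (1+c)*(1+M) * ((((N:ℝ)*β^2) ^ ((1:ℝ)/2))⁻¹) := add_le_add (add_le_add h1 h2) h3
      _ = (1+c)*(1+M) * ((((N:ℝ)*β) ^ ((3:ℝ)/2))⁻¹ + ((N:ℝ)*β)⁻¹ +
          (((N:ℝ)*β^2) ^ ((1:ℝ)/2))⁻¹) := by ring
  calc (N:ℝ)⁻¹ * ((((N:ℝ)*β)^2)⁻¹ * ∑ i, ∫ ω, (∑ j, (ζ (i,j) ω - q i j) * b j ω)^2 ∂P)
      ≤ (N:ℝ)⁻¹ * ((((N:ℝ)*β)^2)⁻¹ *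
        ((N:ℝ) * (Real.sqrt ((N:ℝ)*(c*β) + (N:ℝ)^2*(c*β)^2) * Real.sqrt M) +
         (N:ℝ)^2 * (Real.sqrt ((N:ℝ)*(c*β)^2) * Real.sqrt M))) := by
        refine mul_le_mul_of_nonneg_left (mul_le_mul_of_nonneg_left hAbound (by positivity))
          (by positivity)
    _ ≤ (1+c)*(1+M) * ((((N:ℝ)*β) ^ ((3:ℝ)/2))⁻¹ + ((N:ℝ)*β)⁻¹ +
        (((N:ℝ)*β^2) ^ ((1:ℝ)/2))⁻¹) := hmain
end
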